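/- arXiv:1105.6212 — 7 statements merged into one kernel-verified Lean document; each statement's English description precedes it below -/
import Mathlib

section
/- Let m ≥ 2 and let A₁, A₂, …, A_m be orthogonal projectors on ℂ^N (i.e., A_j² = A_j and A_j* = A_j for each j). Then ‖A₁ + A₂ + … + A_m‖ ≤ 1 + (m−1) · max_{1 ≤ j < k ≤ m} ‖A_j A_k‖. -/
/-- The ℓ²→ℓ² operator norm of a square complex matrix,
i.e. `sup {‖Aψ‖ : ‖ψ‖ = 1}`. -/
noncomputable def matOpNorm {S : Type*} [Fintype S] [DecidableEq S]
    (A : Matrix S S ℂ) : ℝ :=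
  ‖Matrix.toEuclideanCLM (𝕜 := ℂ) A‖

open scoped InnerProductSpace

/-- For orthogonal projectors `A 1, …, A m` (m ≥ 2) on ℂ^N,
`‖A 1 + … + A m‖ ≤ 1 + (m-1) · max_{j<k} ‖A j * A k‖`
(stated with an arbitrary upper bound `C` on the pairwise norms). -/
theorem stmt1 {N m : ℕ} (hm : 2 ≤ m) (A : Fin m → Matrix (Fin N) (Fin N) ℂ)
    (hidem : ∀ j, A j * A j = A j) (hherm : ∀ j, (A j).IsHermitian)
    (C : ℝ) (hC : ∀ j k : Fin m, j < k → matOpNorm (A j * A k) ≤ C) :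
    matOpNorm (∑ j, A j) ≤ 1 + ((m : ℝ) - 1) * C := by
  classical
  have hm1 : (2:ℝ) ≤ (m:ℝ) := by exact_mod_cast hm
  have hC0 : 0 ≤ C := by
    have h01 : (⟨0, by omega⟩ : Fin m) < ⟨1, by omega⟩ := by simp [Fin.lt_def]
    exact le_trans (norm_nonneg _) (hC _ _ h01)
  set K : ℝ := 1 + ((m : ℝ) - 1) * C with hKdef
  have hK0 : 0 ≤ K := by nlinarith
  set T : Fin m → (EuclideanSpace ℂ (Fin N) →L[ℂ] EuclideanSpace ℂ (Fin N)) :=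
    fun j => Matrix.toEuclideanCLM (𝕜 := ℂ) (A j) with hTdef
  have hTstar : ∀ j, star (T j) = T j := by
    intro j
    simp only [hTdef]
    rw [← map_star]
    congr 1
    rw [Matrix.star_eq_conjTranspose]
    exact hherm j
  have hadj : ∀ j, ContinuousLinearMap.adjoint (T j) = T j := fun j => by
    rw [← ContinuousLinearMap.star_eq_adjoint]; exact hTstar j
  have hTmul : ∀ j k, Matrix.toEuclideanCLM (𝕜 := ℂ) (A j * A k) = T j * T k := by
    intro j k; simp only [hTdef]; exact map_mul _ _ _
  have hTidem : ∀ j, T j * T j = T j := by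
    intro j; simp only [hTdef]; rw [← map_mul, hidem j]
  have hnormTC : ∀ j k, j ≠ k → ‖T j * T k‖ ≤ C := by
    intro j k hjk
    rcases hjk.lt_or_gt with h | h
    · rw [← hTmul]; exact hC j k h
    · have hst : T j * T k = ContinuousLinearMap.adjoint (T k * T j) := by
        rw [← ContinuousLinearMap.star_eq_adjoint, star_mul, hTstar, hTstar]
      rw [hst, (ContinuousLinearMap.adjoint : _ ≃ₗᵢ⋆[ℂ] _).norm_map, ← hTmul]
      exact hC k j h
  have hSnorm : matOpNorm (∑ j, A j) = ‖∑ j, T j‖ := by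
    unfold matOpNorm
    rw [map_sum]
  rw [hSnorm]
  apply ContinuousLinearMap.opNorm_le_bound _ hK0
  intro x
  set Λ : ℝ := ∑ j, ‖T j x‖ ^ 2 with hΛ
  have hΛ0 : 0 ≤ Λ := by
    rw [hΛ]; exact Finset.sum_nonneg fun j _ => sq_nonneg _
  set y : EuclideanSpace ℂ (Fin N) := (∑ j, T j) x with hy
  have hyx : y = ∑ j, T j x := by
    rw [hy]; exact ContinuousLinearMap.sum_apply _ _ _
  have hswap : ∀ j (u v : EuclideanSpace ℂ (Fin N)), ⟪T j u, v⟫_ℂ = ⟪u, T j v⟫_ℂ := by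
    intro j u v
    conv_lhs => rw [← hadj j]
    exact ContinuousLinearMap.adjoint_inner_left _ v u
  have hdiag : ∀ j, RCLike.re ⟪T j x, T j x⟫_ℂ = ‖T j x‖ ^ 2 := fun j =>
    inner_self_eq_norm_sq (𝕜 := ℂ) (T j x)
  have hoff : ∀ j k, j ≠ k →
      RCLike.re ⟪T j x, T k x⟫_ℂ ≤ C * (‖T j x‖ * ‖T k x‖) := by
    intro j k hjk
    have h1 : ⟪T j x, T k x⟫_ℂ = ⟪T j x, T j (T k x)⟫_ℂ := by
      conv_lhs => rw [show T j x = (T j * T j) x by rw [hTidem j],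
        ContinuousLinearMap.mul_apply]
      rw [hswap]
    have h2 : T j (T k x) = (T j * T k) (T k x) := by
      rw [ContinuousLinearMap.mul_apply,
        ← ContinuousLinearMap.mul_apply (T k) (T k), hTidem]
    have h3 : ‖T j (T k x)‖ ≤ C * ‖T k x‖ := by
      rw [h2]
      calc ‖(T j * T k) (T k x)‖ ≤ ‖T j * T k‖ * ‖T k x‖ := (T j * T k).le_opNorm _
        _ ≤ C * ‖T k x‖ := mul_le_mul_of_nonneg_right (hnormTC j k hjk) (norm_nonneg _)
    calc RCLike.re ⟪T j x, T k x⟫_ℂ ≤ ‖⟪T j x, T k x⟫_ℂ‖ := RCLike.re_le_norm _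
      _ = ‖⟪T j x, T j (T k x)⟫_ℂ‖ := by rw [h1]
      _ ≤ ‖T j x‖ * ‖T j (T k x)‖ := norm_inner_le_norm _ _
      _ ≤ ‖T j x‖ * (C * ‖T k x‖) := mul_le_mul_of_nonneg_left h3 (norm_nonneg _)
      _ = C * (‖T j x‖ * ‖T k x‖) := by ring
  have hexp : ‖y‖ ^ 2 = ∑ j, ∑ k, RCLike.re ⟪T j x, T k x⟫_ℂ := by
    rw [← inner_self_eq_norm_sq (𝕜 := ℂ) y]
    conv_lhs => rw [hyx, sum_inner]
    rw [map_sum]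
    refine Finset.sum_congr rfl fun j _ => ?_
    rw [inner_sum, map_sum]
  have hbound : ‖y‖ ^ 2 ≤ K * Λ := by
    rw [hexp]
    have key : ∀ j : Fin m, ∑ k, RCLike.re ⟪T j x, T k x⟫_ℂ
        ≤ ‖T j x‖ ^ 2 + C / 2 * (((m:ℝ) - 1) * ‖T j x‖ ^ 2 + (Λ - ‖T j x‖ ^ 2)) := by
      intro j
      rw [← Finset.add_sum_erase _ _ (Finset.mem_univ j), hdiag j]
      have hcard : (Finset.univ.erase j).card = m - 1 := by
        rw [Finset.card_erase_of_mem (Finset.mem_univ j), Finset.card_univ,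
          Fintype.card_fin]
      have hsum2 : ∑ k ∈ Finset.univ.erase j, ‖T k x‖ ^ 2 = Λ - ‖T j x‖ ^ 2 := by
        rw [Finset.sum_erase_eq_sub (Finset.mem_univ j), ← hΛ]
      have hb1 : ∑ k ∈ Finset.univ.erase j, RCLike.re ⟪T j x, T k x⟫_ℂ
          ≤ ∑ k ∈ Finset.univ.erase j, C * ((‖T j x‖ ^ 2 + ‖T k x‖ ^ 2) / 2) := by
        refine Finset.sum_le_sum fun k hk => ?_
        have hjk : j ≠ k := (Finset.ne_of_mem_erase hk).symm
        refine (hoff j k hjk).trans ?_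
        have hamgm : ‖T j x‖ * ‖T k x‖ ≤ (‖T j x‖ ^ 2 + ‖T k x‖ ^ 2) / 2 := by
          nlinarith [sq_nonneg (‖T j x‖ - ‖T k x‖)]
        exact mul_le_mul_of_nonneg_left hamgm hC0
      have hb2 : ∑ k ∈ Finset.univ.erase j, C * ((‖T j x‖ ^ 2 + ‖T k x‖ ^ 2) / 2)
          = C / 2 * (((m:ℝ) - 1) * ‖T j x‖ ^ 2 + (Λ - ‖T j x‖ ^ 2)) := by
        rw [← Finset.mul_sum, ← Finset.sum_div, Finset.sum_add_distrib,
          Finset.sum_const, hcard, hsum2, nsmul_eq_mul]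
        push_cast [Nat.cast_sub (by omega : 1 ≤ m)]
        ring
      rw [← hb2]
      linarith [hb1]
    calc ∑ j, ∑ k, RCLike.re ⟪T j x, T k x⟫_ℂ
        ≤ ∑ j, (‖T j x‖ ^ 2 + C / 2 * (((m:ℝ) - 1) * ‖T j x‖ ^ 2 + (Λ - ‖T j x‖ ^ 2))) :=
          Finset.sum_le_sum fun j _ => key j
      _ = ∑ j, ((1 + C / 2 * ((m:ℝ) - 2)) * ‖T j x‖ ^ 2 + C / 2 * Λ) := by
          refine Finset.sum_congr rfl fun j _ => ?_; ring
      _ = (1 + C / 2 * ((m:ℝ) - 2)) * Λ + (m:ℝ) * (C / 2 * Λ) := by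
          rw [Finset.sum_add_distrib, ← Finset.mul_sum, ← hΛ, Finset.sum_const,
            Finset.card_univ, Fintype.card_fin, nsmul_eq_mul]
      _ = K * Λ := by rw [hKdef]; ring
  have hΛle : Λ ≤ ‖x‖ * ‖y‖ := by
    have h1 : ∀ j, RCLike.re ⟪x, T j x⟫_ℂ = ‖T j x‖ ^ 2 := by
      intro j
      rw [show T j x = (T j * T j) x by rw [hTidem j], ContinuousLinearMap.mul_apply,
        ← hswap, ← ContinuousLinearMap.mul_apply, hTidem]
      exact hdiag j
    have h2 : Λ = RCLike.re ⟪x, y⟫_ℂ := by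
      rw [hyx, inner_sum, map_sum, hΛ]
      exact (Finset.sum_congr rfl fun j _ => (h1 j).symm)
    rw [h2]
    exact (RCLike.re_le_norm _).trans (norm_inner_le_norm x y)
  rcases (norm_nonneg y).eq_or_lt with h0 | h0
  · rw [← h0]; exact mul_nonneg hK0 (norm_nonneg x)
  · have hb2 : ‖y‖ * ‖y‖ ≤ (K * ‖x‖) * ‖y‖ := by
      have e1 : ‖y‖ * ‖y‖ = ‖y‖ ^ 2 := by ring
      have e2 : K * (‖x‖ * ‖y‖) = (K * ‖x‖) * ‖y‖ := by ring
      rw [e1, ← e2]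
      exact hbound.trans (mul_le_mul_of_nonneg_left hΛle hK0)
    exact (mul_le_mul_iff_left₀ h0).mp hb2
end

section
/- Let {|x⟩_j : x ∈ S} and {|y⟩_k : y ∈ S} be two orthonormal bases of ℂ^N (indexed by a finite set S of size N) such that |⟨x|_j |y⟩_k| ≤ c for all x, y ∈ S. For subsets L^j, L^k ⊆ S define the orthogonal projectors A^j := Σ_{x∈L^j} |x⟩_j⟨x|_j and A^k := Σ_{y∈L^k} |y⟩_k⟨y|_k. Then ‖A^j A^k‖ ≤ c · √(|L^j| · |L^k|). -/
/-- The rank-one projector `|v⟩⟨v|` as a matrix. -/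
noncomputable def outer {S : Type*} [Fintype S] (v : EuclideanSpace ℂ S) :
    Matrix S S ℂ :=
  Matrix.of fun a b => v a * star (v b)

lemma outer_clm_apply {S : Type*} [Fintype S] [DecidableEq S]
    (v ψ : EuclideanSpace ℂ S) :
    Matrix.toEuclideanCLM (𝕜 := ℂ) (outer v) ψ = (inner ℂ v ψ : ℂ) • v := by
  ext a
  have h := congrFun (Matrix.ofLp_toEuclideanCLM (𝕜 := ℂ) (outer v) ψ) a
  rw [show ((inner ℂ v ψ : ℂ) • v) a = (inner ℂ v ψ : ℂ) * v a from rfl, h]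
  simp [outer, Matrix.mulVec, dotProduct, PiLp.inner_apply, Finset.sum_mul,
    Finset.mul_sum]
  exact Finset.sum_congr rfl fun b _ => by ring

/-- If two orthonormal bases of ℂ^S have pairwise overlaps at most `c`, then the
product of the projectors onto spans of sub-families `L1`, `L2` has operator
norm at most `c·√(|L1|·|L2|)`. -/
theorem stmt2 {S : Type*} [Fintype S] [DecidableEq S]
    (b1 b2 : OrthonormalBasis S ℂ (EuclideanSpace ℂ S))
    (c : ℝ) (hc : ∀ x y : S, ‖(inner ℂ (b1 x) (b2 y) : ℂ)‖ ≤ c)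
    (L1 L2 : Finset S) :
    matOpNorm ((∑ x ∈ L1, outer (b1 x)) * (∑ y ∈ L2, outer (b2 y)))
      ≤ c * Real.sqrt ((L1.card : ℝ) * (L2.card : ℝ)) := by
  classical
  rcases isEmpty_or_nonempty S with hS | hS
  · have hL1 : L1 = ∅ := Subsingleton.elim _ _
    have h0 : (Matrix.toEuclideanCLM (𝕜 := ℂ)
        ((∑ x ∈ L1, outer (b1 x)) * (∑ y ∈ L2, outer (b2 y)))) = 0 := by
      ext ψ i
      exact isEmptyElim i
    have hz : matOpNorm ((∑ x ∈ L1, outer (b1 x)) * (∑ y ∈ L2, outer (b2 y))) = 0 := by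
      rw [matOpNorm, h0, norm_zero]
    rw [hz, hL1]
    simp
  · have hc0 : 0 ≤ c := le_trans (norm_nonneg _) (hc hS.some hS.some)
    rw [matOpNorm]
    refine ContinuousLinearMap.opNorm_le_bound _ (by positivity) fun ψ => ?_
    set d : S → ℂ := fun y => inner ℂ (b2 y) ψ with hd
    set a : S → ℂ := fun x => ∑ y ∈ L2, d y * (inner ℂ (b1 x) (b2 y) : ℂ) with ha
    -- the operator applied to ψ
    have hT : Matrix.toEuclideanCLM (𝕜 := ℂ)
        ((∑ x ∈ L1, outer (b1 x)) * (∑ y ∈ L2, outer (b2 y))) ψ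
        = ∑ x ∈ L1, a x • b1 x := by
      rw [map_mul, ContinuousLinearMap.mul_apply, map_sum, map_sum,
        ContinuousLinearMap.sum_apply]
      have h2 : (∑ y ∈ L2, Matrix.toEuclideanCLM (𝕜 := ℂ) (outer (b2 y))) ψ
          = ∑ y ∈ L2, d y • b2 y := by
        rw [ContinuousLinearMap.sum_apply]
        exact Finset.sum_congr rfl fun y _ => outer_clm_apply _ _
      rw [h2]
      refine Finset.sum_congr rfl fun x _ => ?_
      rw [outer_clm_apply]
      congr 1
      rw [inner_sum]
      simp [ha, inner_smul_right]
    rw [hT]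
    -- norm of the sum squared
    have hbound : ∀ x, ‖a x‖ ≤ c * Real.sqrt L2.card * ‖ψ‖ := by
      intro x
      calc ‖a x‖ ≤ ∑ y ∈ L2, ‖d y * (inner ℂ (b1 x) (b2 y) : ℂ)‖ := norm_sum_le _ _
        _ = ∑ y ∈ L2, ‖d y‖ * ‖(inner ℂ (b1 x) (b2 y) : ℂ)‖ := by simp [norm_mul]
        _ ≤ ∑ y ∈ L2, ‖d y‖ * c :=
            Finset.sum_le_sum fun y _ =>
              mul_le_mul_of_nonneg_left (hc x y) (norm_nonneg _)
        _ = c * ∑ y ∈ L2, ‖d y‖ * 1 := by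
            rw [Finset.mul_sum]
            exact Finset.sum_congr rfl fun _ _ => by ring
        _ ≤ c * (Real.sqrt (∑ y ∈ L2, ‖d y‖ ^ 2) * Real.sqrt (∑ y ∈ L2, (1:ℝ) ^ 2)) :=
            mul_le_mul_of_nonneg_left (Real.sum_mul_le_sqrt_mul_sqrt _ _ _) hc0
        _ ≤ c * (‖ψ‖ * Real.sqrt L2.card) := by
            have hb : Real.sqrt (∑ y ∈ L2, ‖d y‖ ^ 2) ≤ ‖ψ‖ := by
              calc Real.sqrt (∑ y ∈ L2, ‖d y‖ ^ 2)
                  ≤ Real.sqrt (‖ψ‖ ^ 2) :=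
                    Real.sqrt_le_sqrt (b2.orthonormal.sum_inner_products_le ψ)
                _ = ‖ψ‖ := Real.sqrt_sq (norm_nonneg ψ)
            have h12 : (∑ y ∈ L2, (1:ℝ) ^ 2) = (L2.card : ℝ) := by simp
            rw [h12]
            exact mul_le_mul_of_nonneg_left
              (mul_le_mul_of_nonneg_right hb (Real.sqrt_nonneg _)) hc0
        _ = c * Real.sqrt L2.card * ‖ψ‖ := by ring
    have hsq : ‖∑ x ∈ L1, a x • b1 x‖ ^ 2 = ∑ x ∈ L1, ‖a x‖ ^ 2 := by
      have h1 : (‖∑ x ∈ L1, a x • b1 x‖ : ℝ) ^ 2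
          = RCLike.re (inner (𝕜 := ℂ) (∑ x ∈ L1, a x • b1 x) (∑ x ∈ L1, a x • b1 x)) :=
        InnerProductSpace.norm_sq_eq_re_inner _
      rw [h1, b1.orthonormal.inner_sum a a L1, map_sum]
      refine Finset.sum_congr rfl fun x _ => ?_
      rw [RCLike.conj_mul]
      simp [← Complex.ofReal_pow]
    have key : ‖∑ x ∈ L1, a x • b1 x‖ ^ 2 ≤ (L1.card : ℝ) * (c * Real.sqrt L2.card * ‖ψ‖) ^ 2 := by
      rw [hsq]
      calc ∑ x ∈ L1, ‖a x‖ ^ 2 ≤ ∑ x ∈ L1, (c * Real.sqrt L2.card * ‖ψ‖) ^ 2 :=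
            Finset.sum_le_sum fun x _ => by
              have := hbound x
              exact pow_le_pow_left₀ (norm_nonneg _) this 2
        _ = (L1.card : ℝ) * (c * Real.sqrt L2.card * ‖ψ‖) ^ 2 := by
            rw [Finset.sum_const, nsmul_eq_mul]
    calc ‖∑ x ∈ L1, a x • b1 x‖ = Real.sqrt (‖∑ x ∈ L1, a x • b1 x‖ ^ 2) :=
          (Real.sqrt_sq (norm_nonneg _)).symm
      _ ≤ Real.sqrt ((L1.card : ℝ) * (c * Real.sqrt L2.card * ‖ψ‖) ^ 2) :=
          Real.sqrt_le_sqrt key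
      _ = Real.sqrt L1.card * (c * Real.sqrt L2.card * ‖ψ‖) := by
          rw [Real.sqrt_mul (by positivity), Real.sqrt_sq (by positivity)]
      _ = c * Real.sqrt ((L1.card : ℝ) * (L2.card : ℝ)) * ‖ψ‖ := by
          rw [Real.sqrt_mul (by positivity)]
          ring
end

section
/- Let ρ be an arbitrary density matrix on the 2ⁿ-dimensional Hilbert space of n qubits. For j ∈ {1,…,m}, let Q^j(·) be the outcome distribution when ρ is measured in the basis B_j, i.e., Q^j(x) = ⟨x|_j ρ |x⟩_j for x ∈ {0,1}ⁿ. Then, for any family {L^j}_{j∈{1,…,m}} of subsets L^j ⊆ {0,1}ⁿ, it holds that Σ_{j=1}^m Q^j(L^j) ≤ 1 + c·(m−1)·max_{j≠k} √(|L^j|·|L^k|), where Q^j(L^j) := Σ_{x∈L^j} Q^j(x). -/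
open scoped ComplexOrder

lemma pure_bound {n m : ℕ} (hm : 2 ≤ m)
    (B : Fin m → OrthonormalBasis (Fin n → Bool) ℂ (EuclideanSpace ℂ (Fin n → Bool)))
    (c : ℝ)
    (hc : ∀ j k : Fin m, j ≠ k → ∀ x y, ‖(inner ℂ (B j x) (B k y) : ℂ)‖ ≤ c)
    (hc0 : 0 ≤ c)
    (L : Fin m → Finset (Fin n → Bool))
    (M : ℝ) (hM0 : 0 ≤ M)
    (hM : ∀ j k : Fin m, j ≠ k →
      Real.sqrt (((L j).card : ℝ) * ((L k).card : ℝ)) ≤ M)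
    (ψ : EuclideanSpace ℂ (Fin n → Bool)) (hψ : ‖ψ‖ ≤ 1) :
    ∑ j, ∑ x ∈ L j, ‖(inner ℂ (B j x) ψ : ℂ)‖ ^ 2 ≤ 1 + c * ((m : ℝ) - 1) * M := by
  classical
  set Q : Fin m → ℝ := fun j => ∑ x ∈ L j, ‖(inner ℂ (B j x) ψ : ℂ)‖ ^ 2 with hQ
  have hQ0 : ∀ j, 0 ≤ Q j := fun j => Finset.sum_nonneg fun x _ => sq_nonneg _
  set a : Fin m → ℝ := fun j => Real.sqrt (Q j) with ha
  have ha0 : ∀ j, 0 ≤ a j := fun j => Real.sqrt_nonneg _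
  have ha2 : ∀ j, a j ^ 2 = Q j := fun j => Real.sq_sqrt (hQ0 j)
  set t : ℝ := ∑ j, Q j with ht
  have ht0 : 0 ≤ t := Finset.sum_nonneg fun j _ => hQ0 j
  set φv : Fin m → EuclideanSpace ℂ (Fin n → Bool) :=
    fun j => ∑ x ∈ L j, (inner ℂ (B j x) ψ : ℂ) • (B j x : EuclideanSpace ℂ (Fin n → Bool)) with hφv
  set φ : EuclideanSpace ℂ (Fin n → Bool) := ∑ j, φv j with hφ
  -- step A : inner ℂ ψ φ = t
  have hA : (inner ℂ ψ φ : ℂ) = (t : ℝ) := by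
    rw [hφ, inner_sum]
    push_cast [ht]
    refine Finset.sum_congr rfl fun j _ => ?_
    rw [hφv, inner_sum]
    push_cast [hQ]
    refine Finset.sum_congr rfl fun x _ => ?_
    rw [inner_smul_right, ← inner_conj_symm ψ (B j x), Complex.mul_conj']
  have htφ : t ≤ ‖φ‖ := by
    have h1 : t = (inner ℂ ψ φ : ℂ).re := by rw [hA]; simp
    have h2 : (inner ℂ ψ φ : ℂ).re ≤ ‖(inner ℂ ψ φ : ℂ)‖ := Complex.re_le_norm _
    have h3 : ‖(inner ℂ ψ φ : ℂ)‖ ≤ ‖ψ‖ * ‖φ‖ := norm_inner_le_norm _ _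
    nlinarith [norm_nonneg φ]
  -- bound on ∑ x ∈ L j, ‖inner ℂ (B j x) ψ‖
  have hsum1 : ∀ j, ∑ x ∈ L j, ‖(inner ℂ (B j x) ψ : ℂ)‖ ≤ Real.sqrt ((L j).card) * a j := by
    intro j
    have := Finset.sum_mul_sq_le_sq_mul_sq (L j) (fun _ => (1:ℝ))
      (fun x => ‖(inner ℂ (B j x) ψ : ℂ)‖)
    simp only [one_mul, one_pow] at this
    have h1 : (∑ x ∈ L j, ‖(inner ℂ (B j x) ψ : ℂ)‖) ^ 2 ≤ ((L j).card : ℝ) * Q j := by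
      simpa [hQ] using this
    have h2 : (0:ℝ) ≤ ∑ x ∈ L j, ‖(inner ℂ (B j x) ψ : ℂ)‖ :=
      Finset.sum_nonneg fun x _ => norm_nonneg _
    calc ∑ x ∈ L j, ‖(inner ℂ (B j x) ψ : ℂ)‖
        = Real.sqrt ((∑ x ∈ L j, ‖(inner ℂ (B j x) ψ : ℂ)‖) ^ 2) := (Real.sqrt_sq h2).symm
      _ ≤ Real.sqrt (((L j).card : ℝ) * Q j) := Real.sqrt_le_sqrt h1
      _ = Real.sqrt ((L j).card) * a j := by
          rw [Real.sqrt_mul (Nat.cast_nonneg _)]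
  -- off-diagonal bound
  have hoff : ∀ j k : Fin m, j ≠ k → ‖(inner ℂ (φv j) (φv k) : ℂ)‖ ≤ c * M * (a j * a k) := by
    intro j k hjk
    rw [hφv]
    simp only
    calc ‖(inner ℂ (∑ x ∈ L j, (inner ℂ (B j x) ψ : ℂ) • (B j x : EuclideanSpace ℂ (Fin n → Bool)))
          (∑ y ∈ L k, (inner ℂ (B k y) ψ : ℂ) • (B k y : EuclideanSpace ℂ (Fin n → Bool))) : ℂ)‖
        ≤ ∑ x ∈ L j, ∑ y ∈ L k, ‖(inner ℂ (B j x) ψ : ℂ)‖ * ‖(inner ℂ (B k y) ψ : ℂ)‖ *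
            ‖(inner ℂ (B j x) (B k y) : ℂ)‖ := by
          rw [sum_inner]
          refine (norm_sum_le _ _).trans ?_
          refine Finset.sum_le_sum fun x _ => ?_
          rw [inner_sum]
          refine (norm_sum_le _ _).trans ?_
          refine Finset.sum_le_sum fun y _ => ?_
          rw [inner_smul_left, inner_smul_right, norm_mul, norm_mul, RCLike.norm_conj]
          exact le_of_eq (by ring)
      _ ≤ ∑ x ∈ L j, ∑ y ∈ L k, ‖(inner ℂ (B j x) ψ : ℂ)‖ * ‖(inner ℂ (B k y) ψ : ℂ)‖ * c := by
          refine Finset.sum_le_sum fun x _ => Finset.sum_le_sum fun y _ => ?_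
          exact mul_le_mul_of_nonneg_left (hc j k hjk x y)
            (mul_nonneg (norm_nonneg _) (norm_nonneg _))
      _ = c * ((∑ x ∈ L j, ‖(inner ℂ (B j x) ψ : ℂ)‖) * (∑ y ∈ L k, ‖(inner ℂ (B k y) ψ : ℂ)‖)) := by
          rw [Finset.sum_mul_sum]
          rw [Finset.mul_sum]
          refine Finset.sum_congr rfl fun x _ => ?_
          rw [Finset.mul_sum]
          exact Finset.sum_congr rfl fun y _ => by ring
      _ ≤ c * ((Real.sqrt ((L j).card) * a j) * (Real.sqrt ((L k).card) * a k)) := by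
          refine mul_le_mul_of_nonneg_left ?_ hc0
          refine mul_le_mul (hsum1 j) (hsum1 k) (Finset.sum_nonneg fun y _ => norm_nonneg _) ?_
          exact mul_nonneg (Real.sqrt_nonneg _) (ha0 j)
      _ = c * (Real.sqrt (((L j).card : ℝ) * ((L k).card : ℝ)) * (a j * a k)) := by
          rw [Real.sqrt_mul (Nat.cast_nonneg _)]; ring
      _ ≤ c * M * (a j * a k) := by
          rw [mul_assoc]
          refine mul_le_mul_of_nonneg_left ?_ hc0
          exact mul_le_mul_of_nonneg_right (hM j k hjk)
            (mul_nonneg (ha0 j) (ha0 k))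
  -- diagonal
  have hdiag : ∀ j, (inner ℂ (φv j) (φv j) : ℂ) = (Q j : ℝ) := by
    intro j
    rw [hφv]
    simp only
    rw [sum_inner]
    push_cast [hQ]
    refine Finset.sum_congr rfl fun x hx => ?_
    rw [inner_smul_left, inner_sum]
    rw [Finset.sum_eq_single x]
    · rw [inner_smul_right, inner_self_eq_norm_sq_to_K, (B j).orthonormal.1 x]
      simp only [one_pow, RCLike.ofReal_one, mul_one, RCLike.conj_mul]
      norm_cast
    · intro y _ hyx
      rw [inner_smul_right, (B j).orthonormal.2 (Ne.symm hyx)]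
      simp
    · intro h; exact absurd hx h
  -- norm of φ squared
  have hφsq : ‖φ‖ ^ 2 ≤ t + c * M * ((m : ℝ) - 1) * t := by
    have h1 : (‖φ‖ : ℝ) ^ 2 = (inner ℂ φ φ : ℂ).re := by
      rw [← inner_self_eq_norm_sq (𝕜 := ℂ) φ, RCLike.re_to_complex]
    have h2 : (inner ℂ φ φ : ℂ) = ∑ j, ∑ k, (inner ℂ (φv j) (φv k) : ℂ) := by
      rw [hφ, sum_inner]
      exact Finset.sum_congr rfl fun j _ => by rw [inner_sum]
    have h3 : (inner ℂ φ φ : ℂ).re ≤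
        ∑ j, ∑ k, if j = k then Q j else c * M * (a j * a k) := by
      rw [h2, Complex.re_sum]
      refine Finset.sum_le_sum fun j _ => ?_
      rw [Complex.re_sum]
      refine Finset.sum_le_sum fun k _ => ?_
      by_cases hjk : j = k
      · subst hjk; rw [hdiag j]; simp
      · simp only [hjk, if_false]
        exact (Complex.re_le_norm _).trans (hoff j k hjk)
    have h4 : ∑ j, ∑ k, (if j = k then Q j else c * M * (a j * a k)) =
        c * M * (∑ j, a j) ^ 2 + (t - c * M * t) := by
      have e1 : ∀ j k : Fin m, (if j = k then Q j else c * M * (a j * a k)) =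
          c * M * (a j * a k) + (if j = k then Q j - c * M * (a j * a k) else 0) := by
        intro j k; by_cases h : j = k <;> simp [h] <;> ring
      simp_rw [e1, Finset.sum_add_distrib, Finset.sum_ite_eq]
      simp only [Finset.mem_univ, if_true]
      have e2 : ∑ j : Fin m, ∑ k : Fin m, c * M * (a j * a k) =
          c * M * (∑ j, a j) ^ 2 := by
        rw [sq, Finset.sum_mul_sum, Finset.mul_sum]
        refine Finset.sum_congr rfl fun j _ => ?_
        rw [Finset.mul_sum]
      rw [e2]
      congr 1
      rw [ht, Finset.mul_sum, ← Finset.sum_sub_distrib]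
      refine Finset.sum_congr rfl fun j _ => ?_
      rw [← ha2 j]; ring
    have h5 : (∑ j, a j) ^ 2 ≤ (m : ℝ) * t := by
      have := sq_sum_le_card_mul_sum_sq (s := (Finset.univ : Finset (Fin m))) (f := a)
      simp only [Finset.card_univ, Fintype.card_fin] at this
      calc (∑ j, a j) ^ 2 ≤ (m : ℝ) * ∑ j, a j ^ 2 := by exact_mod_cast this
        _ = (m : ℝ) * t := by rw [ht]; exact congrArg _ (Finset.sum_congr rfl fun j _ => ha2 j)
    calc ‖φ‖ ^ 2 = (inner ℂ φ φ : ℂ).re := h1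
      _ ≤ c * M * (∑ j, a j) ^ 2 + (t - c * M * t) := by rw [← h4]; exact h3
      _ ≤ c * M * ((m : ℝ) * t) + (t - c * M * t) := by
          have := mul_le_mul_of_nonneg_left h5 (mul_nonneg hc0 hM0)
          linarith
      _ = t + c * M * ((m : ℝ) - 1) * t := by ring
  -- conclude
  have hK0 : 0 ≤ 1 + c * ((m : ℝ) - 1) * M := by
    have hm1 : (0:ℝ) ≤ (m : ℝ) - 1 := by
      have : (2:ℝ) ≤ m := by exact_mod_cast hm
      linarith
    positivity
  rcases eq_or_lt_of_le ht0 with h0 | h0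
  · rw [← h0]; exact hK0
  · have ht2 : t ^ 2 ≤ (1 + c * ((m : ℝ) - 1) * M) * t := by
      calc t ^ 2 ≤ ‖φ‖ ^ 2 := by nlinarith [norm_nonneg φ]
        _ ≤ t + c * M * ((m : ℝ) - 1) * t := hφsq
        _ = (1 + c * ((m : ℝ) - 1) * M) * t := by ring
    have := le_of_mul_le_mul_right (by nlinarith : t * t ≤ (1 + c * ((m : ℝ) - 1) * M) * t) h0
    exact this

open scoped ComplexOrder

lemma quad_form_eq {d : Type*} [Fintype d] [DecidableEq d] (ρ : Matrix d d ℂ)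
    (hρ : ρ.IsHermitian) (v : EuclideanSpace ℂ d) :
    dotProduct (star (fun i => v i)) (ρ.mulVec (fun i => v i))
      = ∑ i, (hρ.eigenvalues i : ℂ) *
          ((starRingEnd ℂ) (inner ℂ (hρ.eigenvectorBasis i) v : ℂ) *
            (inner ℂ (hρ.eigenvectorBasis i) v : ℂ)) := by
  classical
  set U : Matrix d d ℂ := (Matrix.IsHermitian.eigenvectorUnitary hρ : Matrix d d ℂ) with hU
  set w : d → ℂ := Matrix.mulVec (star U) (fun i => v i) with hw
  have hwi : ∀ i, w i = (inner ℂ (hρ.eigenvectorBasis i) v : ℂ) := by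
    intro i
    simp only [hw, Matrix.mulVec, dotProduct, Matrix.star_apply, hU,
      Matrix.IsHermitian.eigenvectorUnitary_apply, PiLp.inner_apply, RCLike.inner_apply]
    exact Finset.sum_congr rfl fun _ _ => mul_comm _ _
  have hstep : dotProduct (star (fun i => v i)) (ρ.mulVec (fun i => v i))
      = dotProduct (star w) (Matrix.mulVec (Matrix.diagonal (RCLike.ofReal ∘ hρ.eigenvalues)) w) := by
    conv_lhs => rw [hρ.spectral_theorem, Unitary.conjStarAlgAut_apply]
    rw [← Matrix.mulVec_mulVec, ← Matrix.mulVec_mulVec, Matrix.dotProduct_mulVec]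
    congr 1
    rw [hw, Matrix.star_mulVec, Matrix.star_eq_conjTranspose, Matrix.conjTranspose_conjTranspose]
  rw [hstep]
  rw [dotProduct]
  refine Finset.sum_congr rfl fun i _ => ?_
  rw [Matrix.mulVec_diagonal, hwi i]
  simp only [Pi.star_apply, hwi i, Function.comp_apply, RCLike.star_def]
  exact mul_left_comm _ _ _

lemma trace_eq_sum_eigenvalues' {d : Type*} [Fintype d] [DecidableEq d] (ρ : Matrix d d ℂ)
    (hρ : ρ.IsHermitian) : ρ.trace = ∑ i, (hρ.eigenvalues i : ℂ) := by
  conv_lhs => rw [hρ.spectral_theorem, Unitary.conjStarAlgAut_apply]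
  rw [Matrix.trace_mul_cycle, Matrix.mem_unitaryGroup_iff'.mp
    (Matrix.IsHermitian.eigenvectorUnitary hρ).2, one_mul, Matrix.trace_diagonal]
  rfl

/-- `outcomeProb B ρ j x = ⟨x|_j ρ |x⟩_j`, the probability of outcome `x` when the
`n`-qubit state `ρ` is measured in the basis `B j`. -/
noncomputable def outcomeProb {n m : ℕ}
    (B : Fin m → OrthonormalBasis (Fin n → Bool) ℂ (EuclideanSpace ℂ (Fin n → Bool)))
    (ρ : Matrix (Fin n → Bool) (Fin n → Bool) ℂ) (j : Fin m) (x : Fin n → Bool) : ℝ :=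
  (dotProduct (star (fun i => B j x i)) (ρ.mulVec (fun i => B j x i))).re

/-- Theorem 3 (uncertainty relation in terms of probabilities of sets):
for any m orthonormal bases of the n-qubit space with pairwise overlaps at most `c`,
any density matrix `ρ` and any subsets `L j ⊆ {0,1}ⁿ`,
`∑ j Q^j(L^j) ≤ 1 + c (m-1) max_{j≠k} √(|L^j|·|L^k|)`
(stated with an arbitrary upper bound `M` on the square roots). -/
theorem stmt3 {n m : ℕ} (hm : 2 ≤ m)
    (B : Fin m → OrthonormalBasis (Fin n → Bool) ℂ (EuclideanSpace ℂ (Fin n → Bool)))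
    (c : ℝ)
    (hc : ∀ j k : Fin m, j < k → ∀ x y, ‖(inner ℂ (B j x) (B k y) : ℂ)‖ ≤ c)
    (ρ : Matrix (Fin n → Bool) (Fin n → Bool) ℂ)
    (hρ : ρ.PosSemidef) (htr : ρ.trace = 1)
    (L : Fin m → Finset (Fin n → Bool))
    (M : ℝ)
    (hM : ∀ j k : Fin m, j ≠ k →
      Real.sqrt (((L j).card : ℝ) * ((L k).card : ℝ)) ≤ M) :
    ∑ j, ∑ x ∈ L j, outcomeProb B ρ j x ≤ 1 + c * ((m : ℝ) - 1) * M := by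
  classical
  have hH : ρ.IsHermitian := hρ.1
  set u := hH.eigenvectorBasis with hu
  set lam := hH.eigenvalues with hlam
  have hlam0 : ∀ i, 0 ≤ lam i := hρ.eigenvalues_nonneg
  have hlam1 : ∑ i, lam i = 1 := by
    have h := trace_eq_sum_eigenvalues' ρ hH
    rw [htr] at h
    exact_mod_cast h.symm
  -- symmetric overlap bound
  have hc' : ∀ j k : Fin m, j ≠ k → ∀ x y, ‖(inner ℂ (B j x) (B k y) : ℂ)‖ ≤ c := by
    intro j k hjk x y
    rcases lt_or_gt_of_ne hjk with h | h
    · exact hc j k h x y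
    · rw [norm_inner_symm]
      exact hc k j h y x
  have h01 : (⟨0, by omega⟩ : Fin m) < (⟨1, by omega⟩ : Fin m) := by
    simp [Fin.lt_def]
  have hc0 : 0 ≤ c :=
    le_trans (norm_nonneg _) (hc ⟨0, by omega⟩ ⟨1, by omega⟩ h01 (fun _ => false) (fun _ => false))
  have hM0 : 0 ≤ M :=
    le_trans (Real.sqrt_nonneg _) (hM ⟨0, by omega⟩ ⟨1, by omega⟩ (ne_of_lt h01))
  -- expand the outcome probabilities via the eigenbasis of ρ
  have hout : ∀ (j : Fin m) (x : Fin n → Bool), outcomeProb B ρ j x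
      = ∑ i, lam i * ‖(inner ℂ (B j x) (u i) : ℂ)‖ ^ 2 := by
    intro j x
    rw [outcomeProb, quad_form_eq ρ hH (B j x), Complex.re_sum]
    refine Finset.sum_congr rfl fun i _ => ?_
    rw [RCLike.conj_mul, ← hu, ← hlam, norm_inner_symm (u i) (B j x)]
    simp [Complex.coe_algebraMap, ← Complex.ofReal_pow, ← Complex.ofReal_mul]
  calc ∑ j, ∑ x ∈ L j, outcomeProb B ρ j x
      = ∑ j, ∑ x ∈ L j, ∑ i, lam i * ‖(inner ℂ (B j x) (u i) : ℂ)‖ ^ 2 := by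
        simp_rw [hout]
    _ = ∑ j, ∑ i, ∑ x ∈ L j, lam i * ‖(inner ℂ (B j x) (u i) : ℂ)‖ ^ 2 :=
        Finset.sum_congr rfl fun j _ => Finset.sum_comm
    _ = ∑ i, ∑ j, ∑ x ∈ L j, lam i * ‖(inner ℂ (B j x) (u i) : ℂ)‖ ^ 2 :=
        Finset.sum_comm
    _ = ∑ i, lam i * ∑ j, ∑ x ∈ L j, ‖(inner ℂ (B j x) (u i) : ℂ)‖ ^ 2 := by
        simp_rw [Finset.mul_sum]
    _ ≤ ∑ i, lam i * (1 + c * ((m : ℝ) - 1) * M) := by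
        refine Finset.sum_le_sum fun i _ => ?_
        refine mul_le_mul_of_nonneg_left ?_ (hlam0 i)
        exact pure_bound hm B c hc' hc0 L M hM0 hM (u i)
          (le_of_eq (u.orthonormal.1 i))
    _ = 1 + c * ((m : ℝ) - 1) * M := by
        rw [← Finset.sum_mul, hlam1, one_mul]
end

section
/- Let ρ be an arbitrary density matrix on the 2ⁿ-dimensional Hilbert space of n qubits, and for j ∈ {1,…,m} let Q^j(x) = ⟨x|_j ρ |x⟩_j be the outcome distribution when ρ is measured in basis B_j. Then, for any 0 < ε < δ/4, there exist subsets E^1,…,E^m ⊆ {0,1}ⁿ such that (1) Σ_{j=1}^m Q^j(E^j) ≥ (m−1) − (2m−1)·2^{−εn}, and (2) for every j with Q^j(E^j) > 0 one has max_{x∈E^j} Q^j(x) ≤ 2^{−(δ/2−2ε)n} · Q^j(E^j) (equivalently, the min-entropy of X given J=j and the event X∈E^j is at least (δ/2 − 2ε)n), where Q^j(E^j) := Σ_{x∈E^j} Q^j(x). -/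
open scoped ComplexOrder

/-- `logOverlap n c = δ = -(1/n)·log₂(c²)`. -/
noncomputable def logOverlap (n : ℕ) (c : ℝ) : ℝ :=
  -(1 / (n : ℝ)) * Real.logb 2 (c ^ 2)

set_option linter.unusedSectionVars false
section aux
open Matrix Finset
variable {ι : Type*} [Fintype ι] [DecidableEq ι]

noncomputable def fsq (A : Matrix ι ι ℂ) : ℝ := ∑ p : ι × ι, ‖A p.1 p.2‖^2

lemma fsq_nonneg (A : Matrix ι ι ℂ) : 0 ≤ fsq A :=
  Finset.sum_nonneg fun _ _ => sq_nonneg _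

lemma trace_conjTranspose_mul (A B : Matrix ι ι ℂ) :
    (Aᴴ * B).trace = ∑ p : ι × ι, (starRingEnd ℂ) (A p.2 p.1) * B p.2 p.1 := by
  rw [Matrix.trace, Fintype.sum_prod_type]
  simp [Matrix.mul_apply, Matrix.diag, Matrix.conjTranspose_apply]

lemma re_trace_conjTranspose_mul_self (A : Matrix ι ι ℂ) :
    ((Aᴴ * A).trace).re = fsq A := by
  rw [trace_conjTranspose_mul, Complex.re_sum, fsq,
    ← Equiv.sum_comp (Equiv.prodComm ι ι) (fun p => ‖A p.1 p.2‖^2)]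
  refine Finset.sum_congr rfl fun p _ => ?_
  rw [← Complex.normSq_eq_conj_mul_self, ← Complex.sq_norm]
  rw [Complex.ofReal_re]
  simp [Equiv.prodComm]

lemma norm_trace_CS (A B : Matrix ι ι ℂ) :
    ‖(Aᴴ * B).trace‖^2 ≤ fsq A * fsq B := by
  rw [trace_conjTranspose_mul]
  calc ‖∑ p : ι × ι, (starRingEnd ℂ) (A p.2 p.1) * B p.2 p.1‖^2
      ≤ (∑ p : ι × ι, ‖A p.2 p.1‖ * ‖B p.2 p.1‖)^2 := by
        apply pow_le_pow_left₀ (norm_nonneg _)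
        refine (norm_sum_le _ _).trans ?_
        refine le_of_eq (Finset.sum_congr rfl fun p _ => ?_)
        rw [norm_mul, RCLike.norm_conj]
    _ ≤ (∑ p : ι × ι, ‖A p.2 p.1‖^2) * ∑ p : ι × ι, ‖B p.2 p.1‖^2 :=
        Finset.sum_mul_sq_le_sq_mul_sq _ _ _
    _ = fsq A * fsq B := by
        unfold fsq
        rw [← Equiv.sum_comp (Equiv.prodComm ι ι) (fun p => ‖A p.1 p.2‖^2),
            ← Equiv.sum_comp (Equiv.prodComm ι ι) (fun p => ‖B p.1 p.2‖^2)]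
        rfl

lemma fsq_mul_le (A B : Matrix ι ι ℂ) : fsq (A * B) ≤ fsq A * fsq B := by
  unfold fsq
  calc ∑ p : ι × ι, ‖(A * B) p.1 p.2‖^2
      ≤ ∑ p : ι × ι, (∑ j, ‖A p.1 j‖^2) * (∑ j, ‖B j p.2‖^2) := by
        refine Finset.sum_le_sum fun p _ => ?_
        rw [Matrix.mul_apply]
        calc ‖∑ j, A p.1 j * B j p.2‖^2 ≤ (∑ j, ‖A p.1 j‖ * ‖B j p.2‖)^2 := by
              apply pow_le_pow_left₀ (norm_nonneg _)
              exact (norm_sum_le _ _).trans (le_of_eq (by simp [norm_mul]))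
          _ ≤ _ := Finset.sum_mul_sq_le_sq_mul_sq _ _ _
    _ = _ := by
        rw [Fintype.sum_prod_type, Fintype.sum_prod_type, Fintype.sum_prod_type]
        dsimp only
        rw [← Finset.sum_mul_sum]
        congr 1
        exact Finset.sum_comm

lemma vecMulVec_mul_vecMulVec (u v w z : ι → ℂ) :
    vecMulVec u v * vecMulVec w z = (v ⬝ᵥ w) • vecMulVec u z := by
  ext i j
  simp [vecMulVec_apply, Matrix.mul_apply, dotProduct, Finset.sum_mul, Finset.mul_sum]
  exact Finset.sum_congr rfl (fun k _ => by ring)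

lemma trace_vecMulVec (u w : ι → ℂ) : (Matrix.vecMulVec u w).trace = u ⬝ᵥ w := by
  simp [Matrix.trace, Matrix.diag, Matrix.vecMulVec_apply, dotProduct]

lemma trace_mul_outer (ρ : Matrix ι ι ℂ) (u : ι → ℂ) :
    (ρ * Matrix.vecMulVec u (star u)).trace = star u ⬝ᵥ ρ.mulVec u := by
  simp only [Matrix.trace, Matrix.diag, Matrix.mul_apply, Matrix.vecMulVec_apply,
    dotProduct, Matrix.mulVec, Pi.star_apply, Finset.mul_sum]
  refine Finset.sum_congr rfl fun a _ => Finset.sum_congr rfl fun b _ => by ring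

lemma dot_conj (u w : ι → ℂ) : u ⬝ᵥ star w = (starRingEnd ℂ) (star u ⬝ᵥ w) := by
  rw [dotProduct, dotProduct, map_sum]
  refine Finset.sum_congr rfl fun i _ => ?_
  simp [mul_comm]

end aux

open Matrix Finset

set_option maxHeartbeats 1000000 in
/-- Corollary 4: there exist "good" sets `E j` such that their total probability is at
least `(m-1) - (2m-1)·2^{-εn}` and, whenever `Q^j(E^j) > 0`, every `x ∈ E j` has
`Q^j(x) ≤ 2^{-(δ/2-2ε)n}·Q^j(E^j)`, i.e. the min-entropy of the outcome conditioned
on `J = j` and the event `X ∈ E j` is at least `(δ/2 - 2ε)n`. -/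
theorem stmt4 {n m : ℕ} (hm : 2 ≤ m)
    (B : Fin m → OrthonormalBasis (Fin n → Bool) ℂ (EuclideanSpace ℂ (Fin n → Bool)))
    (c : ℝ)
    (hc : ∀ j k : Fin m, j < k → ∀ x y, ‖(inner ℂ (B j x) (B k y) : ℂ)‖ ≤ c)
    (ρ : Matrix (Fin n → Bool) (Fin n → Bool) ℂ)
    (hρ : ρ.PosSemidef) (htr : ρ.trace = 1)
    (ε : ℝ) (hε0 : 0 < ε) (hε : ε < logOverlap n c / 4) :
    ∃ E : Fin m → Finset (Fin n → Bool),
      (((m : ℝ) - 1) - (2 * (m : ℝ) - 1) * (2 : ℝ) ^ (-(ε * (n : ℝ)))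
          ≤ ∑ j, ∑ x ∈ E j, outcomeProb B ρ j x) ∧
      (∀ j, 0 < ∑ x ∈ E j, outcomeProb B ρ j x →
        ∀ x ∈ E j, outcomeProb B ρ j x ≤
          (2 : ℝ) ^ (-((logOverlap n c / 2 - 2 * ε) * (n : ℝ))) *
            ∑ x' ∈ E j, outcomeProb B ρ j x') := by
  classical
  have hmR : (2:ℝ) ≤ (m:ℝ) := by exact_mod_cast hm
  set δ : ℝ := logOverlap n c with hδdef
  have hδ : 0 < δ := by linarith
  have hn : 0 < n := by
    rcases Nat.eq_zero_or_pos n with h | h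
    · exfalso
      have h0 : δ = 0 := by rw [hδdef, logOverlap, h]; norm_num
      linarith
    · exact h
  have hN : 0 < (n:ℝ) := by exact_mod_cast hn
  have hlogb : Real.logb 2 (c ^ 2) = -(δ * n) := by
    have h1 : δ = -(1 / (n:ℝ)) * Real.logb 2 (c ^ 2) := by rw [hδdef, logOverlap]
    have hN' : (n:ℝ) ≠ 0 := ne_of_gt hN
    field_simp at h1
    linarith
  have hc2pos : 0 < c ^ 2 := by
    rcases (sq_nonneg c).lt_or_eq with h | h
    · exact h
    · exfalso
      rw [← h, Real.logb_zero] at hlogb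
      nlinarith [mul_pos hδ hN]
  have hc2 : c ^ 2 = (2:ℝ) ^ (-(δ * (n:ℝ))) := by
    rw [← hlogb]
    exact (Real.rpow_logb (by norm_num) (by norm_num) hc2pos).symm
  set t : ℝ := (δ / 2 - ε) * n with htdef
  set d : ℝ := (2:ℝ) ^ (-(ε * (n:ℝ))) with hddef
  have hd0 : 0 < d := Real.rpow_pos_of_pos (by norm_num) _
  -- vectors of the bases
  set vv : Fin m → (Fin n → Bool) → ((Fin n → Bool) → ℂ) := fun j x i => B j x i with hvv
  have hQc : ∀ j x, star (vv j x) ⬝ᵥ ρ.mulVec (vv j x) = ((outcomeProb B ρ j x : ℝ) : ℂ) := by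
    intro j x
    have h := hρ.dotProduct_mulVec_nonneg (vv j x)
    rw [Complex.le_def] at h
    apply Complex.ext
    · rw [Complex.ofReal_re]; rfl
    · rw [Complex.ofReal_im]; simpa using h.2.symm
  have hQ0 : ∀ j x, 0 ≤ outcomeProb B ρ j x := by
    intro j x
    have h := hρ.dotProduct_mulVec_nonneg (vv j x)
    rw [Complex.le_def] at h
    exact (by simpa using h.1 : 0 ≤ (star (vv j x) ⬝ᵥ ρ.mulVec (vv j x)).re)
  have hON : ∀ j (x y : Fin n → Bool),
      star (vv j x) ⬝ᵥ vv j y = if x = y then (1:ℂ) else 0 := by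
    intro j x y
    have h := (orthonormal_iff_ite.mp (B j).orthonormal) x y
    rw [← h]
    simp [PiLp.inner_apply, RCLike.inner_apply, dotProduct, hvv, RCLike.star_def, mul_comm]
  have hip : ∀ (j k : Fin m) x y, (inner ℂ (B j x) (B k y) : ℂ) = star (vv j x) ⬝ᵥ vv k y := by
    intro j k x y
    simp [PiLp.inner_apply, RCLike.inner_apply, dotProduct, hvv, RCLike.star_def, mul_comm]
  have hover : ∀ (j k : Fin m), j ≠ k → ∀ x y, ‖star (vv j x) ⬝ᵥ vv k y‖ ≤ c := by
    intro j k hjk x y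
    rcases lt_or_gt_of_ne hjk with h | h
    · rw [← hip]; exact hc j k h x y
    · rw [← hip]
      calc ‖(inner ℂ (B j x) (B k y) : ℂ)‖ = ‖(inner ℂ (B k y) (B j x) : ℂ)‖ :=
            norm_inner_symm _ _
        _ ≤ c := hc k j h y x
  -- resolution of the identity
  have hres : ∀ j, ∑ x : Fin n → Bool, Matrix.vecMulVec (vv j x) (star (vv j x))
      = (1 : Matrix (Fin n → Bool) (Fin n → Bool) ℂ) := by
    intro j
    set U : Matrix (Fin n → Bool) (Fin n → Bool) ℂ := Matrix.of (fun a x => vv j x a) with hU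
    have h1 : Uᴴ * U = 1 := by
      ext x y
      rw [Matrix.mul_apply, Matrix.one_apply, ← hON j x y]
      rw [dotProduct]
      refine Finset.sum_congr rfl fun i _ => ?_
      simp [hU, Matrix.conjTranspose_apply]
    have h2 : U * Uᴴ = 1 := mul_eq_one_comm.mp h1
    ext a b
    rw [← h2, Matrix.sum_apply, Matrix.mul_apply]
    refine Finset.sum_congr rfl fun x _ => ?_
    simp [Matrix.vecMulVec_apply, Matrix.conjTranspose_apply, hU]
  -- total probability is 1
  have htot : ∀ j, ∑ x : Fin n → Bool, outcomeProb B ρ j x = 1 := by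
    intro j
    have h : ∑ x : Fin n → Bool, ((outcomeProb B ρ j x : ℝ) : ℂ) = (1:ℂ) := by
      calc ∑ x : Fin n → Bool, ((outcomeProb B ρ j x : ℝ):ℂ)
          = ∑ x : Fin n → Bool, (ρ * Matrix.vecMulVec (vv j x) (star (vv j x))).trace := by
            refine Finset.sum_congr rfl fun x _ => ?_
            rw [trace_mul_outer, hQc]
        _ = (ρ * ∑ x : Fin n → Bool, Matrix.vecMulVec (vv j x) (star (vv j x))).trace := by
            rw [Finset.mul_sum, Matrix.trace_sum]
        _ = (1:ℂ) := by rw [hres j, mul_one, htr]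
    have h2 := congrArg Complex.re h
    rw [Complex.re_sum] at h2
    simpa using h2
  -- bad and good sets
  set Bad : Fin m → Finset (Fin n → Bool) :=
    fun j => Finset.univ.filter (fun x => (2:ℝ) ^ (-t) < outcomeProb B ρ j x) with hBad
  set E0 : Fin m → Finset (Fin n → Bool) :=
    fun j => Finset.univ.filter (fun x => outcomeProb B ρ j x ≤ (2:ℝ) ^ (-t)) with hE0
  have hBadj : ∀ j, Bad j = Finset.univ.filter (fun x => (2:ℝ) ^ (-t) < outcomeProb B ρ j x) :=
    fun j => by rw [hBad]
  have hE0j : ∀ j, E0 j = Finset.univ.filter (fun x => outcomeProb B ρ j x ≤ (2:ℝ) ^ (-t)) :=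
    fun j => by rw [hE0]
  set a : Fin m → ℝ := fun j => ∑ x ∈ Bad j, outcomeProb B ρ j x with ha
  have haj : ∀ j, a j = ∑ x ∈ Bad j, outcomeProb B ρ j x := fun j => by rw [ha]
  have ha0 : ∀ j, 0 ≤ a j := fun j => by
    rw [haj]; exact Finset.sum_nonneg fun x _ => hQ0 j x
  have haE : ∀ j, (∑ x ∈ E0 j, outcomeProb B ρ j x) = 1 - a j := by
    intro j
    have h := Finset.sum_filter_add_sum_filter_not Finset.univ
      (fun x => outcomeProb B ρ j x ≤ (2:ℝ)^(-t)) (outcomeProb B ρ j)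
    have hnot : Finset.univ.filter (fun x => ¬ outcomeProb B ρ j x ≤ (2:ℝ)^(-t)) = Bad j := by
      rw [hBadj]; congr 1; ext x; rw [not_le]
    rw [hnot, htot j, ← hE0j j, ← haj j] at h
    linarith
  have ha1 : ∀ j, a j ≤ 1 := by
    intro j
    rw [← htot j, haj]
    exact Finset.sum_le_sum_of_subset_of_nonneg (Finset.subset_univ _) (fun x _ _ => hQ0 j x)
  have hcard : ∀ j, ((Bad j).card : ℝ) ≤ (2:ℝ) ^ t := by
    intro j
    have h1 : ((Bad j).card : ℝ) * (2:ℝ)^(-t) ≤ a j := by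
      rw [haj]
      calc ((Bad j).card : ℝ) * (2:ℝ)^(-t) = ∑ _x ∈ Bad j, (2:ℝ)^(-t) := by
            rw [Finset.sum_const, nsmul_eq_mul]
        _ ≤ ∑ x ∈ Bad j, outcomeProb B ρ j x := by
            refine Finset.sum_le_sum fun x hx => ?_
            rw [hBadj] at hx
            exact le_of_lt (Finset.mem_filter.mp hx).2
    have h3 : (0:ℝ) < (2:ℝ)^(-t) := Real.rpow_pos_of_pos (by norm_num) _
    have h4 : (2:ℝ)^t * (2:ℝ)^(-t) = 1 := by
      rw [← Real.rpow_add (by norm_num)]; simp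
    nlinarith [h1, ha1 j]
  -- the square root of ρ and projectors
  set σ : Matrix (Fin n → Bool) (Fin n → Bool) ℂ := (by open scoped MatrixOrder in exact CFC.sqrt ρ) with hσdef
  have hσσ : σ * σ = ρ := by open scoped MatrixOrder in exact CFC.sqrt_mul_sqrt_self ρ hρ.nonneg
  have hσh : σᴴ = σ := by open scoped MatrixOrder in exact (CFC.sqrt_nonneg ρ).posSemidef.1
  set P : Fin m → Matrix (Fin n → Bool) (Fin n → Bool) ℂ :=
    fun j => ∑ x ∈ Bad j, Matrix.vecMulVec (vv j x) (star (vv j x)) with hP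
  have hPj : ∀ j, P j = ∑ x ∈ Bad j, Matrix.vecMulVec (vv j x) (star (vv j x)) :=
    fun j => by rw [hP]
  have hPh : ∀ j, (P j)ᴴ = P j := by
    intro j
    rw [hPj, Matrix.conjTranspose_sum]
    refine Finset.sum_congr rfl fun x _ => ?_
    ext u w
    simp [Matrix.conjTranspose_apply, Matrix.vecMulVec_apply, mul_comm]
  have hPP : ∀ j, P j * P j = P j := by
    intro j
    rw [hPj, Finset.sum_mul_sum]
    calc ∑ x ∈ Bad j, ∑ y ∈ Bad j,
          Matrix.vecMulVec (vv j x) (star (vv j x)) * Matrix.vecMulVec (vv j y) (star (vv j y))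
        = ∑ x ∈ Bad j, ∑ y ∈ Bad j,
            (if x = y then (1:ℂ) else 0) • Matrix.vecMulVec (vv j x) (star (vv j y)) := by
          refine Finset.sum_congr rfl fun x _ => Finset.sum_congr rfl fun y _ => ?_
          rw [_root_.vecMulVec_mul_vecMulVec, hON]
      _ = ∑ x ∈ Bad j, Matrix.vecMulVec (vv j x) (star (vv j x)) := by
          refine Finset.sum_congr rfl fun x hx => ?_
          rw [Finset.sum_eq_single x]
          · simp
          · intro y _ hyx
            rw [if_neg (Ne.symm hyx), zero_smul]
          · intro hxx; exact absurd hx hxx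
  have hPabsorb : ∀ (j : Fin m) (A : Matrix (Fin n → Bool) (Fin n → Bool) ℂ),
      P j * (P j * A) = P j * A := by
    intro j A; rw [← mul_assoc, hPP]
  have htrP : ∀ j, (ρ * P j).trace = ((a j : ℝ) : ℂ) := by
    intro j
    rw [hPj, Finset.mul_sum, Matrix.trace_sum, haj, Complex.ofReal_sum]
    refine Finset.sum_congr rfl fun x _ => ?_
    rw [trace_mul_outer, hQc]
  -- main quantities
  set lam : ℝ := ∑ j, a j with hlam
  have hlam0 : 0 ≤ lam := by
    rw [hlam]; exact Finset.sum_nonneg fun j _ => ha0 j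
  set T : Matrix (Fin n → Bool) (Fin n → Bool) ℂ := ∑ j, P j with hT
  have hTh : Tᴴ = T := by
    rw [hT, Matrix.conjTranspose_sum]
    exact Finset.sum_congr rfl fun j _ => hPh j
  have htrT : (ρ * T).trace = ((lam : ℝ) : ℂ) := by
    rw [hT, Finset.mul_sum, Matrix.trace_sum, hlam, Complex.ofReal_sum]
    exact Finset.sum_congr rfl fun j _ => htrP j
  have hfsqσ : fsq σ = 1 := by
    rw [← re_trace_conjTranspose_mul_self, hσh, hσσ, htr]
    simp
  have hfsqPσ : ∀ j, fsq (P j * σ) = a j := by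
    intro j
    rw [← re_trace_conjTranspose_mul_self]
    have h1 : (P j * σ)ᴴ * (P j * σ) = σ * (P j * σ) := by
      rw [Matrix.conjTranspose_mul, hσh, hPh, mul_assoc, ← mul_assoc (P j), hPP]
    rw [h1, Matrix.trace_mul_comm σ (P j * σ), mul_assoc, hσσ,
      Matrix.trace_mul_comm (P j) ρ, htrP j, Complex.ofReal_re]
  -- step 1 : lam² ≤ fsq (T σ)
  have hstep1 : lam ^ 2 ≤ fsq (T * σ) := by
    have h1 : (σᴴ * (T * σ)).trace = ((lam : ℝ) : ℂ) := by
      rw [hσh, Matrix.trace_mul_comm σ (T * σ), mul_assoc T σ σ, hσσ,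
        Matrix.trace_mul_comm T ρ, htrT]
    have h2 := norm_trace_CS σ (T * σ)
    rw [h1] at h2
    have h3 : ‖((lam : ℝ):ℂ)‖^2 = lam^2 := by
      rw [Complex.norm_real, Real.norm_eq_abs, sq_abs]
    rw [h3, hfsqσ, one_mul] at h2
    exact h2
  -- fsq (T σ) as a trace
  have hfsqTσ : fsq (T * σ) = ((ρ * (T * T)).trace).re := by
    rw [← re_trace_conjTranspose_mul_self]
    congr 1
    rw [Matrix.conjTranspose_mul, hσh, hTh, mul_assoc σ T (T * σ), ← mul_assoc T T σ,
        Matrix.trace_mul_comm σ ((T*T)*σ), mul_assoc (T*T) σ σ, hσσ,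
        Matrix.trace_mul_comm (T*T) ρ]
  -- cross bounds
  have hPjPk : ∀ j k, j ≠ k → fsq (P j * P k) ≤ d * d := by
    intro j k hjk
    have hexp : fsq (P j * P k) = ∑ y ∈ Bad k, ∑ x ∈ Bad j, ‖star (vv k y) ⬝ᵥ vv j x‖^2 := by
      rw [← re_trace_conjTranspose_mul_self]
      have h1 : (P j * P k)ᴴ * (P j * P k) = P k * (P j * P k) := by
        rw [Matrix.conjTranspose_mul, hPh, hPh, mul_assoc (P k) (P j) (P j * P k), hPabsorb]
      rw [h1]
      have h2 : (P k * (P j * P k)).trace = (P k * P j).trace := by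
        rw [← mul_assoc, Matrix.trace_mul_comm (P k * P j) (P k), ← mul_assoc, hPP]
      rw [h2, hPj k, hPj j, Finset.sum_mul_sum, Matrix.trace_sum, Complex.re_sum]
      refine Finset.sum_congr rfl fun y _ => ?_
      rw [Matrix.trace_sum, Complex.re_sum]
      refine Finset.sum_congr rfl fun x _ => ?_
      rw [_root_.vecMulVec_mul_vecMulVec, Matrix.trace_smul, _root_.trace_vecMulVec, dot_conj,
        smul_eq_mul, Complex.mul_conj]
      rw [Complex.ofReal_re]
      rw [← Complex.sq_norm]
    rw [hexp]
    calc ∑ y ∈ Bad k, ∑ x ∈ Bad j, ‖star (vv k y) ⬝ᵥ vv j x‖^2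
        ≤ ∑ _y ∈ Bad k, ∑ _x ∈ Bad j, c^2 := by
          refine Finset.sum_le_sum fun y _ => Finset.sum_le_sum fun x _ => ?_
          exact pow_le_pow_left₀ (norm_nonneg _) (hover k j (Ne.symm hjk) y x) 2
      _ = ((Bad k).card : ℝ) * (((Bad j).card : ℝ) * c^2) := by
          simp [Finset.sum_const, nsmul_eq_mul, mul_assoc]
      _ ≤ (2:ℝ)^t * ((2:ℝ)^t * c^2) := by
          have h1 := hcard j
          have h2 := hcard k
          have h3 : (0:ℝ) ≤ c^2 := sq_nonneg c
          have h4 : (0:ℝ) ≤ ((Bad j).card : ℝ) := Nat.cast_nonneg _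
          have h5 : (0:ℝ) < (2:ℝ)^t := Real.rpow_pos_of_pos (by norm_num) _
          exact mul_le_mul h2 (mul_le_mul_of_nonneg_right h1 h3)
            (mul_nonneg h4 h3) h5.le
      _ = d * d := by
          rw [hc2, hddef, ← Real.rpow_add (by norm_num), ← Real.rpow_add (by norm_num),
            ← Real.rpow_add (by norm_num)]
          congr 1
          rw [htdef]; ring
  have hcross : ∀ j k, j ≠ k → ((ρ * (P j * P k)).trace).re
      ≤ d * (Real.sqrt (a j) * Real.sqrt (a k)) := by
    intro j k hjk
    have hid : (ρ * (P j * P k)).trace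
        = ((P j * σ)ᴴ * ((P j * P k) * (P k * σ))).trace := by
      rw [Matrix.conjTranspose_mul, hσh, hPh]
      rw [Matrix.trace_mul_comm ρ (P j * P k)]
      simp only [mul_assoc]
      rw [hPabsorb j, hPabsorb k]
      rw [Matrix.trace_mul_comm σ (P j * (P k * σ))]
      simp only [mul_assoc]
      rw [hσσ]
    have h2 := norm_trace_CS (P j * σ) ((P j * P k) * (P k * σ))
    have h3 : fsq ((P j * P k) * (P k * σ)) ≤ (d*d) * a k := by
      calc fsq ((P j * P k) * (P k * σ)) ≤ fsq (P j * P k) * fsq (P k * σ) := fsq_mul_le _ _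
        _ ≤ (d*d) * a k := by
            rw [hfsqPσ k]
            exact mul_le_mul_of_nonneg_right (hPjPk j k hjk) (ha0 k)
    have h4 : ‖((P j * σ)ᴴ * ((P j * P k) * (P k * σ))).trace‖^2 ≤ (a j) * ((d*d) * a k) := by
      refine h2.trans ?_
      rw [hfsqPσ j]
      exact mul_le_mul_of_nonneg_left h3 (ha0 j)
    have h5 : ‖((P j * σ)ᴴ * ((P j * P k) * (P k * σ))).trace‖
        ≤ Real.sqrt ((a j) * ((d*d) * a k)) := by
      rw [Real.le_sqrt (norm_nonneg _)
        (mul_nonneg (ha0 j) (mul_nonneg (mul_nonneg hd0.le hd0.le) (ha0 k)))]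
      exact h4
    have h6 : Real.sqrt ((a j) * ((d*d) * a k)) = d * (Real.sqrt (a j) * Real.sqrt (a k)) := by
      rw [Real.sqrt_mul (ha0 j), Real.sqrt_mul (mul_nonneg hd0.le hd0.le),
        Real.sqrt_mul_self hd0.le]
      ring
    calc ((ρ * (P j * P k)).trace).re
        ≤ ‖((P j * σ)ᴴ * ((P j * P k) * (P k * σ))).trace‖ := by
          rw [hid]
          exact (Complex.re_le_norm _).trans (le_of_eq rfl)
      _ ≤ Real.sqrt ((a j) * ((d*d) * a k)) := h5
      _ = d * (Real.sqrt (a j) * Real.sqrt (a k)) := h6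
  -- bound on the trace of ρ T²
  have hTT : ((ρ * (T * T)).trace).re ≤ lam + d * (((m:ℝ)-1) * lam) := by
    have hexp : (ρ * (T * T)).trace = ∑ j, ∑ k, (ρ * (P j * P k)).trace := by
      rw [hT, Finset.sum_mul_sum, Finset.mul_sum, Matrix.trace_sum]
      refine Finset.sum_congr rfl fun j _ => ?_
      rw [Finset.mul_sum, Matrix.trace_sum]
    have hre : ((ρ * (T * T)).trace).re = ∑ j, ∑ k, ((ρ * (P j * P k)).trace).re := by
      rw [hexp, Complex.re_sum]
      exact Finset.sum_congr rfl fun j _ => Complex.re_sum _ _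
    rw [hre]
    have hdiag : ∀ j : Fin m, ((ρ * (P j * P j)).trace).re = a j := by
      intro j
      rw [hPP j, htrP j, Complex.ofReal_re]
    have hs : ∀ j : Fin m, ∑ k ∈ Finset.univ.erase j, Real.sqrt (a k)
        = (∑ k, Real.sqrt (a k)) - Real.sqrt (a j) :=
      fun j => Finset.sum_erase_eq_sub (Finset.mem_univ j)
    have hsq : (∑ j, Real.sqrt (a j))^2 ≤ (m:ℝ) * lam := by
      have h := sq_sum_le_card_mul_sum_sq (s := (Finset.univ : Finset (Fin m)))
        (f := fun j => Real.sqrt (a j))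
      have h2 : ∑ j : Fin m, Real.sqrt (a j)^2 = lam := by
        rw [hlam]
        exact Finset.sum_congr rfl fun j _ => Real.sq_sqrt (ha0 j)
      rw [h2] at h
      simpa [Finset.card_univ] using h
    calc ∑ j, ∑ k, ((ρ * (P j * P k)).trace).re
        = ∑ j : Fin m, (a j + ∑ k ∈ Finset.univ.erase j, ((ρ * (P j * P k)).trace).re) := by
          refine Finset.sum_congr rfl fun j _ => ?_
          rw [← Finset.add_sum_erase Finset.univ _ (Finset.mem_univ j), hdiag j]
      _ ≤ ∑ j : Fin m, (a j + ∑ k ∈ Finset.univ.erase j,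
            d * (Real.sqrt (a j) * Real.sqrt (a k))) := by
          refine Finset.sum_le_sum fun j _ => add_le_add_right (Finset.sum_le_sum fun k hk => ?_) _
          exact hcross j k (Ne.symm (Finset.mem_erase.mp hk).1)
      _ = lam + d * ((∑ j, Real.sqrt (a j))^2 - lam) := by
          rw [Finset.sum_add_distrib, ← hlam]
          congr 1
          calc ∑ j : Fin m, ∑ k ∈ Finset.univ.erase j, d * (Real.sqrt (a j) * Real.sqrt (a k))
              = ∑ j : Fin m, d * (Real.sqrt (a j) *
                  ((∑ k, Real.sqrt (a k)) - Real.sqrt (a j))) := by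
                refine Finset.sum_congr rfl fun j _ => ?_
                rw [← Finset.mul_sum, ← Finset.mul_sum, hs j]
            _ = d * ((∑ j, Real.sqrt (a j))^2 - lam) := by
                rw [← Finset.mul_sum]
                congr 1
                have hterm : ∀ j : Fin m, Real.sqrt (a j) *
                    ((∑ k, Real.sqrt (a k)) - Real.sqrt (a j))
                    = Real.sqrt (a j) * (∑ k, Real.sqrt (a k)) - a j := by
                  intro j
                  rw [mul_sub, Real.mul_self_sqrt (ha0 j)]
                rw [Finset.sum_congr rfl (fun j _ => hterm j), Finset.sum_sub_distrib,
                  ← Finset.sum_mul, sq, ← hlam]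
      _ ≤ lam + d * (((m:ℝ)-1) * lam) := by
          have h1 : (∑ j, Real.sqrt (a j))^2 - lam ≤ ((m:ℝ)-1) * lam := by nlinarith
          nlinarith [hd0.le]
  -- the key bound : lam ≤ 1 + (m-1) d
  have hlam_le : lam ≤ 1 + ((m:ℝ) - 1) * d := by
    have h1 : lam^2 ≤ lam + d*(((m:ℝ)-1)*lam) := by
      refine hstep1.trans ?_
      rw [hfsqTσ]
      exact hTT
    rcases hlam0.lt_or_eq with h | h
    · nlinarith
    · rw [← h]
      nlinarith [hd0.le]
  -- choice of the sets E
  set S0 : Fin m → ℝ := fun j => ∑ x ∈ E0 j, outcomeProb B ρ j x with hS0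
  have hS0j : ∀ j, S0 j = ∑ x ∈ E0 j, outcomeProb B ρ j x := fun j => by rw [hS0]
  refine ⟨fun j => if d ≤ S0 j then E0 j else ∅, ?_, ?_⟩
  · have hper : ∀ j, S0 j - d ≤ ∑ x ∈ (if d ≤ S0 j then E0 j else ∅), outcomeProb B ρ j x := by
      intro j
      by_cases h : d ≤ S0 j
      · rw [if_pos h, ← hS0j j]
        linarith [hd0.le]
      · rw [if_neg h]
        push_neg at h
        rw [Finset.sum_empty]
        linarith
    have hsum : ∑ j, (S0 j - d)
        ≤ ∑ j, ∑ x ∈ (if d ≤ S0 j then E0 j else ∅), outcomeProb B ρ j x :=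
      Finset.sum_le_sum fun j _ => hper j
    have hS0sum : ∑ j, S0 j = (m:ℝ) - lam := by
      calc ∑ j, S0 j = ∑ j : Fin m, (1 - a j) := by
            refine Finset.sum_congr rfl fun j _ => ?_
            rw [hS0j j, haE j]
        _ = (m:ℝ) - lam := by
            rw [Finset.sum_sub_distrib, ← hlam]
            simp [Finset.card_univ]
    have heq : ∑ j, (S0 j - d) = ((m:ℝ) - lam) - (m:ℝ)*d := by
      rw [Finset.sum_sub_distrib, hS0sum, Finset.sum_const]
      simp [Finset.card_univ, nsmul_eq_mul]
    refine le_trans ?_ hsum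
    rw [heq]
    linarith [hlam_le]
  · intro j hpos x hx
    dsimp only at hpos hx ⊢
    by_cases h : d ≤ S0 j
    · rw [if_pos h] at hx ⊢
      have hxQ : outcomeProb B ρ j x ≤ (2:ℝ)^(-t) := by
        rw [hE0j] at hx
        exact (Finset.mem_filter.mp hx).2
      have hmul : (2:ℝ)^(-t) = (2:ℝ)^(-((δ/2 - 2*ε)*(n:ℝ))) * d := by
        rw [hddef, ← Real.rpow_add (by norm_num), htdef]
        congr 1
        ring
      calc outcomeProb B ρ j x ≤ (2:ℝ)^(-t) := hxQ
        _ = (2:ℝ)^(-((δ/2-2*ε)*(n:ℝ))) * d := hmul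
        _ ≤ (2:ℝ)^(-((δ/2-2*ε)*(n:ℝ))) * ∑ x' ∈ E0 j, outcomeProb B ρ j x' := by
            refine mul_le_mul_of_nonneg_left ?_ (le_of_lt (Real.rpow_pos_of_pos (by norm_num) _))
            rw [← hS0j j]
            exact h
    · rw [if_neg h] at hpos
      rw [Finset.sum_empty] at hpos
      exact absurd hpos (lt_irrefl 0)
end

section
/- Let ρ be an arbitrary density matrix on the 2ⁿ-dimensional Hilbert space of n qubits, let P_J be an arbitrary probability distribution on {1,…,m}, and let the pair (J,X) have joint distribution P_{JX}(j,x) = P_J(j)·Q^j(x), where Q^j(x) = ⟨x|_j ρ |x⟩_j is the outcome distribution when ρ is measured in basis B_j. Then, for any 0 < ε < δ/4, there exists a joint probability distribution of random variables (J, J', X, Ψ) with J' taking values in {1,…,m} and Ψ a {true,false}-valued event, such that: (1) the marginal distribution of (J,X) equals P_{JX}; (2) J and J' are independent; (3) Pr[Ψ] ≥ 1 − 2·2^{−εn}; and (4) for all j ≠ j' in {1,…,m} with Pr[J=j, J'=j', Ψ] > 0, max_x Pr[X=x | J=j, J'=j', Ψ] ≤ 2 · 2^{−(δ/2−2ε)n},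 i.e., H_min(X | J=j, J'=j', Ψ) ≥ (δ/2 − 2ε)n − 1. -/
open scoped ComplexOrder

open Finset Matrix


private lemma comp_lemma {κ ι : Type*} [Fintype κ] [DecidableEq κ] [Fintype ι]
    (q : ι → ℝ) (hq : ∀ x, 0 ≤ q x) (H : Finset ι) (R : κ → ℝ) (j : κ) (s θ : ℝ)
    (hs : 0 < s) (hθ : 0 < θ)
    (hH1 : ∀ x ∈ H, θ * (∑ x, q x) < q x)
    (hH2 : ∀ x ∉ H, q x ≤ θ * (∑ x, q x))
    (hR0 : ∀ j', 0 ≤ R j') (hRsum : ∑ j', R j' = ∑ x, q x)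
    (hRj : (∑ x ∈ H, q x) - s * (∑ x, q x) ≤ R j) :
    ∃ P : κ → ι → Bool → ℝ,
      (∀ j' x ψ, 0 ≤ P j' x ψ) ∧
      (∀ x, ∑ j', ∑ ψ, P j' x ψ = q x) ∧
      (∀ j', ∑ x, ∑ ψ, P j' x ψ = R j') ∧
      (∑ j', ∑ x, P j' x false ≤ 2 * s * (∑ x, q x)) ∧
      (∀ j', j' ≠ j → ∀ x,
        s * P j' x true ≤ θ * ∑ x', P j' x' true) := by
  classical
  set lam := ∑ x, q x with hlam
  set h := ∑ x ∈ H, q x with hh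
  set η := min h (R j) with hη
  set ν : κ → ℝ := fun j' => (R j' - if j' = j then η else 0) / (lam - η) with hν
  have hlam0 : 0 ≤ lam := Finset.sum_nonneg fun x _ => hq x
  have hh0 : 0 ≤ h := Finset.sum_nonneg fun x _ => hq x
  have hhlam : h ≤ lam :=
    Finset.sum_le_sum_of_subset_of_nonneg (Finset.subset_univ H) fun x _ _ => hq x
  have hcompl : ∑ x ∈ Hᶜ, q x = lam - h := by
    have := Finset.sum_add_sum_compl H q
    rw [← hlam, ← hh] at this; linarith
  have hη0 : 0 ≤ η := le_min hh0 (hR0 j)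
  have hηh : η ≤ h := min_le_left _ _
  have hηR : η ≤ R j := min_le_right _ _
  have hηlam : η ≤ lam := hηh.trans hhlam
  have hν0 : ∀ j', 0 ≤ ν j' := by
    intro j'
    apply div_nonneg _ (by linarith)
    by_cases hj : j' = j
    · simp [hj]; linarith
    · simp [hj]; exact hR0 j'
  have hRjle : ∀ j', R j' ≤ lam := by
    intro j'
    rw [← hRsum]
    exact Finset.single_le_sum (fun k _ => hR0 k) (mem_univ j')
  have hID : ∀ j', η * (if j' = j then 1 else 0) + (lam - η) * ν j' = R j' := by
    intro j'
    by_cases hdeg : lam - η = 0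
    · have hηe : η = lam := by linarith
      have hRjlam : R j = lam := le_antisymm (hRjle j) (hηe ▸ hηR)
      by_cases hj : j' = j
      · simp [hj, hdeg, hηe, hRjlam]
      · have hpair : R j' + R j ≤ ∑ k, R k := by
          have := Finset.sum_le_sum_of_subset_of_nonneg
            (Finset.subset_univ {j', j}) (fun k _ _ => hR0 k)
          rwa [Finset.sum_pair hj] at this
        have : R j' = 0 := le_antisymm (by rw [hRsum] at hpair; linarith) (hR0 j')
        simp [hj, hdeg, this]
    · have hmul : (lam - η) * ν j' = R j' - (if j' = j then η else 0) := by
        rw [hν]; dsimp only; rw [mul_comm, div_mul_cancel₀ _ hdeg]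
      rw [hmul]
      by_cases hj : j' = j <;> simp [hj]
  have hIDj : η + (lam - η) * ν j = R j := by
    have := hID j; simpa using this
  have hIDj' : ∀ j', j' ≠ j → (lam - η) * ν j' = R j' := by
    intro j' hj; have := hID j'; simpa [hj] using this
  have hSν : (lam - η) * (∑ j', ν j') = lam - η := by
    have h1 : ∑ j', (η * (if j' = j then 1 else 0) + (lam - η) * ν j') = lam := by
      rw [Finset.sum_congr rfl fun j' _ => hID j', hRsum]
    rw [Finset.sum_add_distrib, ← Finset.mul_sum, ← Finset.mul_sum] at h1
    simp only [Finset.sum_ite_eq', mem_univ, if_true] at h1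
    linarith
  have hSν1 : lam - η ≠ 0 → ∑ j', ν j' = 1 := fun hdeg =>
    mul_left_cancel₀ hdeg (by rw [hSν, mul_one])
  have hνdeg : lam - η = 0 → ∀ j', ν j' = 0 := by
    intro hdeg j'; rw [hν]; dsimp only; rw [hdeg, div_zero]
  have hSν0 : 0 ≤ ∑ j', ν j' := Finset.sum_nonneg fun j' _ => hν0 j'
  have hSνle1 : ∑ j', ν j' ≤ 1 := by
    by_cases hdeg : lam - η = 0
    · rw [Finset.sum_congr rfl fun j' _ => hνdeg hdeg j']; simp
    · rw [hSν1 hdeg]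
  have hqH : ∀ x ∈ H, 0 < q x := fun x hx =>
    lt_of_le_of_lt (mul_nonneg hθ.le hlam0) (hH1 x hx)
  have hhHpos : H.Nonempty → 0 < h := fun ⟨x, hx⟩ =>
    lt_of_lt_of_le (hqH x hx) (Finset.single_le_sum (fun y hy => hq y) hx)
  have hdivle1 : η / h ≤ 1 := by
    rcases eq_or_lt_of_le hh0 with h0 | h0
    · simp [← h0]
    · exact div_le_one_of_le₀ hηh hh0
  have hdiv0 : 0 ≤ η / h := div_nonneg hη0 hh0
  have hdeglight : lam - η = 0 → ∀ x ∉ H, q x = 0 := by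
    intro hdeg x hx
    have hhe : h = lam := le_antisymm hhlam (by linarith)
    have hlight : ∑ x ∈ Hᶜ, q x = 0 := by rw [hcompl, hhe]; ring
    exact (Finset.sum_eq_zero_iff_of_nonneg fun y _ => hq y).mp hlight x
      (Finset.mem_compl.mpr hx)
  have hhη : h - η ≤ s * lam := by
    rcases min_cases h (R j) with ⟨he, _⟩ | ⟨he, _⟩
    · rw [hη, he]; simp; positivity
    · rw [hη, he]; linarith
  -- the kernel
  refine ⟨fun j' x ψ =>
    if ψ then
      (if x ∈ H then (if j' = j then q x * (η / h) else 0)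
       else (if s * lam < lam - h then q x * ν j' else 0))
    else
      (if x ∈ H then q x * ((1 - η / h) * ν j')
       else (if s * lam < lam - h then 0 else q x * ν j')), ?_, ?_, ?_, ?_, ?_⟩
  · intro j' x ψ
    cases ψ <;> dsimp only <;> split_ifs <;>
      first
        | exact le_refl 0
        | exact mul_nonneg (hq x) hdiv0
        | exact mul_nonneg (hq x) (hν0 j')
        | exact mul_nonneg (hq x) (mul_nonneg (by linarith [hdivle1]) (hν0 j'))
  · -- x-marginal
    intro x
    have hb : ∀ (f : Bool → ℝ), (∑ ψ, f ψ) = f true + f false := fun f => by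
      simp [Fintype.sum_bool]
    simp only [hb, reduceIte, Bool.false_eq_true, if_false]
    by_cases hx : x ∈ H
    · have hhpos : 0 < h := hhHpos ⟨x, hx⟩
      simp only [if_pos hx]
      rw [Finset.sum_add_distrib]
      rw [Finset.sum_ite_eq' univ j (fun _ => q x * (η / h))]
      simp only [mem_univ, if_true]
      rw [← Finset.mul_sum, ← Finset.mul_sum]
      by_cases hdeg : lam - η = 0
      · have hηe : η = lam := by linarith
        have hhe : h = lam := le_antisymm hhlam (by linarith)
        have hd1 : η / h = 1 := by rw [hηe, hhe]; exact div_self (by linarith)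
        rw [hd1]; ring
      · rw [hSν1 hdeg]; field_simp <;> ring
  -- careful: field_simp may need h ≠ 0; we have hhpos
    · simp only [if_neg hx]
      have hcomb : ∀ j' : κ,
          ((if s * lam < lam - h then q x * ν j' else 0) +
            (if s * lam < lam - h then 0 else q x * ν j')) = q x * ν j' := by
        intro j'; split_ifs <;> ring
      rw [Finset.sum_congr rfl fun j' _ => hcomb j', ← Finset.mul_sum]
      by_cases hdeg : lam - η = 0
      · rw [hdeglight hdeg x hx]; ring
      · rw [hSν1 hdeg]; ring
  · -- j'-marginal
    intro j'
    have hb : ∀ (f : Bool → ℝ), (∑ ψ, f ψ) = f true + f false := fun f => by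
      simp [Fintype.sum_bool]
    have hdivη : h * (η / h) = η := by
      rcases eq_or_lt_of_le hh0 with h0 | h0
      · have hη0' : η = 0 := le_antisymm (h0 ▸ hηh) hη0
        rw [← h0, hη0']; simp
      · field_simp
    have hdivh : ∀ C : ℝ, h * ((1 - η / h) * C) = (h - η) * C := by
      intro C
      rcases eq_or_lt_of_le hh0 with h0 | h0
      · have hη0' : η = 0 := le_antisymm (h0 ▸ hηh) hη0
        rw [← h0, hη0']; simp
      · field_simp <;> ring
    simp only [hb, reduceIte, Bool.false_eq_true, if_false]
    rw [← Finset.sum_add_sum_compl H]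
    by_cases hj : j' = j
    · subst hj
      have hHsum : ∀ x ∈ H,
          ((if x ∈ H then (if j' = j' then q x * (η / h) else 0)
            else (if s * lam < lam - h then q x * ν j' else 0)) +
           (if x ∈ H then q x * ((1 - η / h) * ν j')
            else (if s * lam < lam - h then 0 else q x * ν j')))
          = q x * (η / h) + q x * ((1 - η / h) * ν j') := by
        intro x hx; simp only [if_pos hx, eq_self_iff_true, if_true]
      have hCsum : ∀ x ∈ Hᶜ,
          ((if x ∈ H then (if j' = j' then q x * (η / h) else 0)
            else (if s * lam < lam - h then q x * ν j' else 0)) +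
           (if x ∈ H then q x * ((1 - η / h) * ν j')
            else (if s * lam < lam - h then 0 else q x * ν j')))
          = q x * ν j' := by
        intro x hx
        simp only [if_neg (Finset.mem_compl.mp hx)]
        split_ifs <;> ring
      rw [Finset.sum_congr rfl hHsum, Finset.sum_congr rfl hCsum,
        Finset.sum_add_distrib, ← Finset.sum_mul, ← Finset.sum_mul, ← Finset.sum_mul,
        hcompl, ← hh, hdivη, hdivh]
      linear_combination hIDj
    · have hHsum : ∀ x ∈ H,
          ((if x ∈ H then (if j' = j then q x * (η / h) else 0)
            else (if s * lam < lam - h then q x * ν j' else 0)) +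
           (if x ∈ H then q x * ((1 - η / h) * ν j')
            else (if s * lam < lam - h then 0 else q x * ν j')))
          = q x * ((1 - η / h) * ν j') := by
        intro x hx; simp only [if_pos hx, if_neg hj, zero_add]
      have hCsum : ∀ x ∈ Hᶜ,
          ((if x ∈ H then (if j' = j then q x * (η / h) else 0)
            else (if s * lam < lam - h then q x * ν j' else 0)) +
           (if x ∈ H then q x * ((1 - η / h) * ν j')
            else (if s * lam < lam - h then 0 else q x * ν j')))
          = q x * ν j' := by
        intro x hx
        simp only [if_neg (Finset.mem_compl.mp hx)]
        split_ifs <;> ring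
      rw [Finset.sum_congr rfl hHsum, Finset.sum_congr rfl hCsum,
        ← Finset.sum_mul, ← Finset.sum_mul, hcompl, ← hh, hdivh]
      linear_combination hIDj' j' hj
  · -- failure probability
    have hdivh : ∀ C : ℝ, h * ((1 - η / h) * C) = (h - η) * C := by
      intro C
      rcases eq_or_lt_of_le hh0 with h0 | h0
      · have hη0' : η = 0 := le_antisymm (h0 ▸ hηh) hη0
        rw [← h0, hη0']; simp
      · field_simp <;> ring
    have hinner : ∀ j', (∑ x, (if x ∈ H then q x * ((1 - η / h) * ν j')
        else (if s * lam < lam - h then 0 else q x * ν j')))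
        = (h - η) * ν j' + (if s * lam < lam - h then 0 else (lam - h) * ν j') := by
      intro j'
      rw [← Finset.sum_add_sum_compl H]
      have h1 : ∀ x ∈ H, (if x ∈ H then q x * ((1 - η / h) * ν j')
          else (if s * lam < lam - h then 0 else q x * ν j'))
          = q x * ((1 - η / h) * ν j') := fun x hx => by simp only [if_pos hx]
      have h2 : ∀ x ∈ Hᶜ, (if x ∈ H then q x * ((1 - η / h) * ν j')
          else (if s * lam < lam - h then 0 else q x * ν j'))
          = (if s * lam < lam - h then 0 else q x * ν j') := fun x hx => by
        simp only [if_neg (Finset.mem_compl.mp hx)]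
      rw [Finset.sum_congr rfl h1, Finset.sum_congr rfl h2,
        ← Finset.sum_mul, ← hh, hdivh]
      congr 1
      split_ifs
      · simp
      · rw [← Finset.sum_mul, hcompl]
    simp only [reduceIte, Bool.false_eq_true, if_false]
    rw [Finset.sum_congr rfl fun j' _ => hinner j']
    rw [Finset.sum_add_distrib, ← Finset.mul_sum]
    have ht1 : (h - η) * (∑ j', ν j') ≤ s * lam := by
      calc (h - η) * (∑ j', ν j') ≤ (h - η) * 1 :=
            mul_le_mul_of_nonneg_left hSνle1 (by linarith)
        _ = h - η := mul_one _
        _ ≤ s * lam := hhη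
    have ht2 : (∑ j', (if s * lam < lam - h then 0 else (lam - h) * ν j')) ≤ s * lam := by
      split_ifs with hbr
      · simp; positivity
      · push_neg at hbr
        rw [← Finset.mul_sum]
        calc (lam - h) * (∑ j', ν j') ≤ (lam - h) * 1 :=
              mul_le_mul_of_nonneg_left hSνle1 (by linarith)
          _ = lam - h := mul_one _
          _ ≤ s * lam := hbr
    linarith
  · -- flatness
    intro j' hj x
    simp only [reduceIte, Bool.false_eq_true, if_false, if_neg hj]
    have hDsum : (∑ x', (if x' ∈ H then (0:ℝ)
        else (if s * lam < lam - h then q x' * ν j' else 0)))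
        = if s * lam < lam - h then (lam - h) * ν j' else 0 := by
      rw [← Finset.sum_add_sum_compl H]
      have h1 : ∀ x' ∈ H, (if x' ∈ H then (0:ℝ)
          else (if s * lam < lam - h then q x' * ν j' else 0)) = 0 := fun x' hx' => by
        simp only [if_pos hx']
      have h2 : ∀ x' ∈ Hᶜ, (if x' ∈ H then (0:ℝ)
          else (if s * lam < lam - h then q x' * ν j' else 0))
          = (if s * lam < lam - h then q x' * ν j' else 0) := fun x' hx' => by
        simp only [if_neg (Finset.mem_compl.mp hx')]
      rw [Finset.sum_congr rfl h1, Finset.sum_congr rfl h2, Finset.sum_const_zero, zero_add]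
      split_ifs
      · rw [← Finset.sum_mul, hcompl]
      · exact Finset.sum_const_zero
    rw [hDsum]
    by_cases hbr : s * lam < lam - h
    · simp only [if_pos hbr]
      by_cases hx : x ∈ H
      · simp only [if_pos hx]
        have : (0:ℝ) ≤ θ * ((lam - h) * ν j') := by
          apply mul_nonneg hθ.le (mul_nonneg (by nlinarith) (hν0 j'))
        linarith
      · simp only [if_neg hx, if_pos hbr]
        have hq2 := hH2 x hx
        have hν' := hν0 j'
        nlinarith [mul_le_mul_of_nonneg_right hq2 hν', mul_nonneg (mul_nonneg hθ.le hlam0) hν']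
    · simp only [if_neg hbr]
      by_cases hx : x ∈ H
      · simp only [if_pos hx]; simp
      · simp only [if_neg hx, if_neg hbr]; simp


private lemma parseval' {dI : Type*} [Fintype dI] [DecidableEq dI]
    (b : OrthonormalBasis dI ℂ (EuclideanSpace ℂ dI)) (u : EuclideanSpace ℂ dI) :
    ∑ x, ‖(inner ℂ (b x) u : ℂ)‖ ^ 2 = ‖u‖ ^ 2 := by
  have h1 : ∀ x, ‖(inner ℂ (b x) u : ℂ)‖ ^ 2 = ‖b.repr u x‖ ^ 2 := by
    intro x; rw [b.repr_apply_apply]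
  rw [Finset.sum_congr rfl fun x _ => h1 x]
  have h2 : ‖b.repr u‖ = ‖u‖ := b.repr.norm_map u
  rw [← h2, EuclideanSpace.norm_eq]
  rw [Real.sq_sqrt (Finset.sum_nonneg fun x _ => sq_nonneg _)]

private lemma arith1 {T lam s : ℝ} (h2 : T^2 ≤ T*lam + (s/2)*T^2) (hT : 0 < T) :
    T*(1-s/2) ≤ lam := by nlinarith

private lemma arith2 {T lam s : ℝ} (h3 : T*(1-s/2) ≤ lam) (hs1 : s ≤ 1) (hT0 : 0 ≤ T) :
    T ≤ 2*lam := by nlinarith [mul_nonneg (sub_nonneg.2 hs1) hT0]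

private lemma arith3 {T lam s : ℝ} (h : T ≤ 2*lam) (hs : 0 ≤ s) : (s/2)*T ≤ s*lam := by
  nlinarith [mul_le_mul_of_nonneg_left h (by positivity : (0:ℝ) ≤ s/2)]

private lemma core_lemma {dI : Type*} [Fintype dI] [DecidableEq dI] {mI : ℕ}
    (B : Fin mI → OrthonormalBasis dI ℂ (EuclideanSpace ℂ dI)) (c s θ : ℝ)
    (hc0 : 0 < c) (hs : 0 < s) (hs1 : s ≤ 1) (hθ : θ = 2 * c / s)
    (hcB : ∀ j k : Fin mI, j ≠ k → ∀ x y, ‖(inner ℂ (B j x) (B k y) : ℂ)‖ ≤ c)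
    (u : EuclideanSpace ℂ dI) (q : Fin mI → dI → ℝ)
    (hqdef : ∀ j x, q j x = ‖(inner ℂ (B j x) u : ℂ)‖ ^ 2)
    (lam : ℝ) (hlamdef : lam = ‖u‖ ^ 2) :
    ∑ j, max ((∑ x ∈ univ.filter (fun x => θ * lam < q j x), q j x) - s * lam) 0 ≤ lam := by
  classical
  have hθ0 : 0 < θ := by rw [hθ]; positivity
  have hlam0 : 0 ≤ lam := by rw [hlamdef]; positivity
  have hq0 : ∀ j x, 0 ≤ q j x := fun j x => by rw [hqdef]; positivity
  set H : Fin mI → Finset dI := fun j => univ.filter (fun x => θ * lam < q j x) with hH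
  set h : Fin mI → ℝ := fun j => ∑ x ∈ H j, q j x with hhd
  have hP : ∀ j, ∑ x, q j x = lam := by
    intro j
    rw [Finset.sum_congr rfl fun x _ => hqdef j x, parseval', hlamdef]
  have hh0 : ∀ j, 0 ≤ h j := fun j => Finset.sum_nonneg fun x _ => hq0 j x
  have hhlam : ∀ j, h j ≤ lam := fun j => by
    rw [← hP j]
    exact Finset.sum_le_sum_of_subset_of_nonneg (Finset.subset_univ _) fun x _ _ => hq0 j x
  -- rewrite goal as a sum over the "bad" set A
  have hmax : ∀ j : Fin mI, max (h j - s * lam) 0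
      = if 0 < h j - s * lam then h j - s * lam else 0 := by
    intro j
    rcases le_or_gt (h j - s * lam) 0 with hle | hlt
    · rw [max_eq_right hle, if_neg (not_lt.mpr hle)]
    · rw [max_eq_left hlt.le, if_pos hlt]
  rw [Finset.sum_congr rfl fun j _ => hmax j, ← Finset.sum_filter]
  set A : Finset (Fin mI) := univ.filter (fun j => 0 < h j - s * lam) with hA
  rcases Finset.eq_empty_or_nonempty A with hAe | ⟨j₀, hj₀⟩
  · rw [hAe]; simpa using hlam0
  rcases eq_or_lt_of_le hlam0 with hlz | hlampos
  · -- lam = 0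
    exfalso
    have h2 := (Finset.mem_filter.mp hj₀).2
    have h1 := hhlam j₀
    nlinarith [hh0 j₀]
  -- now lam > 0
  have hvj : ∀ j : Fin mI, (∑ x ∈ H j, (inner ℂ (B j x) u : ℂ) • (B j x : EuclideanSpace ℂ dI))
      = ∑ x ∈ H j, (inner ℂ (B j x) u : ℂ) • (B j x : EuclideanSpace ℂ dI) := fun j => rfl
  set a : Fin mI → dI → ℂ := fun j x => (inner ℂ (B j x) u : ℂ) with ha
  set v : Fin mI → EuclideanSpace ℂ dI := fun j => ∑ x ∈ H j, a j x • (B j x) with hv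
  set W : EuclideanSpace ℂ dI := ∑ j ∈ A, v j with hWdef
  set T : ℝ := ∑ j ∈ A, h j with hTdef
  set SA : Fin mI → ℝ := fun j => ∑ x ∈ H j, ‖a j x‖ with hSAdef
  have hvjd : ∀ j, v j = ∑ x ∈ H j, a j x • (B j x) := fun j => rfl
  have hqa : ∀ j x, q j x = ‖a j x‖ ^ 2 := fun j x => hqdef j x
  have hterm : ∀ j x, (starRingEnd ℂ) (a j x) * a j x = ((q j x : ℝ) : ℂ) := by
    intro j x
    rw [hqa j x, Complex.sq_norm, Complex.normSq_eq_conj_mul_self]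
  have hdiag : ∀ j, (inner ℂ (v j) (v j) : ℂ) = ((h j : ℝ) : ℂ) := by
    intro j
    rw [hvjd j, (B j).orthonormal.inner_sum (a j) (a j) (H j), hhd]
    push_cast
    exact Finset.sum_congr rfl fun x _ => hterm j x
  have hSAnn : ∀ j, 0 ≤ SA j := fun j => Finset.sum_nonneg fun x _ => norm_nonneg _
  have hθl : 0 < θ * lam := mul_pos hθ0 hlampos
  have hSA : ∀ j, Real.sqrt (θ * lam) * SA j ≤ h j := by
    intro j
    rw [hSAdef]
    dsimp only
    rw [Finset.mul_sum, hhd]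
    apply Finset.sum_le_sum
    intro x hx
    have hxH : θ * lam < q j x := (Finset.mem_filter.mp hx).2
    have h1 : Real.sqrt (θ * lam) ≤ ‖a j x‖ := by
      rw [← Real.sqrt_sq (norm_nonneg (a j x)), ← hqa]
      exact Real.sqrt_le_sqrt hxH.le
    calc Real.sqrt (θ * lam) * ‖a j x‖ ≤ ‖a j x‖ * ‖a j x‖ :=
          mul_le_mul_of_nonneg_right h1 (norm_nonneg _)
      _ = q j x := by rw [hqa]; ring
  have hmid : ∀ j k, j ≠ k → ∀ x, ‖(inner ℂ (B j x) (v k) : ℂ)‖ ≤ c * SA k := by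
    intro j k hjk x
    rw [hvjd k, inner_sum]
    refine le_trans (norm_sum_le _ _) ?_
    rw [hSAdef]
    dsimp only
    rw [Finset.mul_sum]
    apply Finset.sum_le_sum
    intro y hy
    rw [inner_smul_right]
    refine le_trans (norm_mul_le _ _) ?_
    rw [mul_comm c _]
    exact mul_le_mul_of_nonneg_left (hcB j k hjk x y) (norm_nonneg _)
  have hoff : ∀ j k, j ≠ k → ‖(inner ℂ (v j) (v k) : ℂ)‖ ≤ c * (SA j * SA k) := by
    intro j k hjk
    rw [hvjd j, sum_inner]
    refine le_trans (norm_sum_le _ _) ?_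
    have hstep : ∀ x ∈ H j, ‖(inner ℂ (a j x • (B j x)) (v k) : ℂ)‖
        ≤ ‖a j x‖ * (c * SA k) := by
      intro x hx
      rw [inner_smul_left]
      refine le_trans (norm_mul_le _ _) ?_
      rw [RCLike.norm_conj]
      exact mul_le_mul_of_nonneg_left (hmid j k hjk x) (norm_nonneg _)
    refine le_trans (Finset.sum_le_sum hstep) ?_
    rw [← Finset.sum_mul]
    rw [hSAdef]
    dsimp only
    ring_nf
    exact le_refl _
  set CC : ℝ := c / (θ * lam) with hCCdef
  have hCC0 : 0 ≤ CC := by positivity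
  have hcross : ∀ j k, j ≠ k → ‖(inner ℂ (v j) (v k) : ℂ)‖ ≤ CC * (h j * h k) := by
    intro j k hjk
    refine le_trans (hoff j k hjk) ?_
    have key : (Real.sqrt (θ * lam) * SA j) * (Real.sqrt (θ * lam) * SA k) ≤ h j * h k :=
      mul_le_mul (hSA j) (hSA k) (mul_nonneg (Real.sqrt_nonneg _) (hSAnn k)) (hh0 j)
    have expand : (Real.sqrt (θ * lam) * SA j) * (Real.sqrt (θ * lam) * SA k)
        = (θ * lam) * (SA j * SA k) := by
      rw [mul_mul_mul_comm, Real.mul_self_sqrt hθl.le]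
    rw [hCCdef, div_mul_eq_mul_div, le_div_iff₀ hθl]
    calc c * (SA j * SA k) * (θ * lam) = c * ((θ * lam) * (SA j * SA k)) := by ring
      _ = c * ((Real.sqrt (θ * lam) * SA j) * (Real.sqrt (θ * lam) * SA k)) := by rw [expand]
      _ ≤ c * (h j * h k) := mul_le_mul_of_nonneg_left key hc0.le
  -- bound on ‖W‖²
  have hWW : (inner ℂ W W : ℂ) = ∑ j ∈ A, ∑ k ∈ A, (inner ℂ (v j) (v k) : ℂ) := by
    rw [hWdef, sum_inner]
    exact Finset.sum_congr rfl fun j _ => inner_sum _ _ _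
  have hreW : ‖W‖ ^ 2 ≤ T + CC * T ^ 2 := by
    have h1 : ‖W‖ ^ 2 = Complex.re (inner ℂ W W : ℂ) := by
      rw [← inner_self_eq_norm_sq (𝕜 := ℂ), RCLike.re_to_complex]
    rw [h1, hWW, Complex.re_sum]
    have h2 : ∀ j ∈ A, (∑ k ∈ A, (inner ℂ (v j) (v k) : ℂ)).re
        ≤ (h j - CC * (h j * h j)) + CC * (h j * T) := by
      intro j hjA
      rw [Complex.re_sum]
      have h3 : ∀ k ∈ A, ((inner ℂ (v j) (v k) : ℂ)).re
          ≤ (if k = j then h j - CC * (h j * h j) else 0) + CC * (h j * h k) := by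
        intro k hkA
        by_cases hkj : k = j
        · subst hkj
          rw [hdiag k, if_pos rfl, Complex.ofReal_re]
          ring_nf
          exact le_refl _
        · rw [if_neg hkj]
          have h4 : ((inner ℂ (v j) (v k) : ℂ)).re ≤ ‖(inner ℂ (v j) (v k) : ℂ)‖ :=
            Complex.re_le_norm _
          refine le_trans h4 (le_trans (hcross j k (fun he => hkj he.symm)) ?_)
          rw [zero_add]
      refine le_trans (Finset.sum_le_sum h3) ?_
      rw [Finset.sum_add_distrib, Finset.sum_ite_eq' A j
        (fun _ => h j - CC * (h j * h j)), if_pos hjA]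
      have h5 : ∑ k ∈ A, CC * (h j * h k) = CC * (h j * T) := by
        rw [hTdef, ← Finset.mul_sum, ← Finset.mul_sum]
      rw [h5]
    refine le_trans (Finset.sum_le_sum h2) ?_
    rw [Finset.sum_add_distrib, Finset.sum_sub_distrib]
    have h6 : ∑ j ∈ A, CC * (h j * T) = CC * T ^ 2 := by
      rw [← Finset.mul_sum, ← Finset.sum_mul, ← hTdef]
      ring
    rw [h6, ← hTdef]
    have h7 : 0 ≤ ∑ j ∈ A, CC * (h j * h j) :=
      Finset.sum_nonneg fun j _ => mul_nonneg hCC0 (mul_nonneg (hh0 j) (hh0 j))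
    linarith
  -- T ≤ ‖W‖ ‖u‖
  have hvu : ∀ j, (inner ℂ (v j) u : ℂ) = ((h j : ℝ) : ℂ) := by
    intro j
    rw [hvjd j, sum_inner, hhd]
    push_cast
    refine Finset.sum_congr rfl fun x hx => ?_
    rw [inner_smul_left]
    exact hterm j x
  have hWu : (inner ℂ W u : ℂ) = ((T : ℝ) : ℂ) := by
    rw [hWdef, sum_inner, hTdef]
    push_cast
    exact Finset.sum_congr rfl fun j _ => hvu j
  have hT0 : 0 ≤ T := Finset.sum_nonneg fun j _ => hh0 j
  have hTpos : 0 < T := by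
    have h2 := (Finset.mem_filter.mp hj₀).2
    have h3 : h j₀ ≤ T := Finset.single_le_sum (fun j _ => hh0 j) hj₀
    nlinarith [mul_nonneg hs.le hlam0]
  have hTle : T ≤ ‖W‖ * ‖u‖ := by
    have h1 : T = ((inner ℂ W u : ℂ)).re := by rw [hWu, Complex.ofReal_re]
    have h2 : ‖(inner ℂ W u : ℂ)‖ ≤ ‖W‖ * ‖u‖ := by
      exact norm_inner_le_norm W u
    rw [h1]
    exact le_trans (Complex.re_le_norm _) h2
  have hT2 : T ^ 2 ≤ T * lam + (s / 2) * T ^ 2 := by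
    have hCClam : CC * lam = s / 2 := by
      rw [hCCdef, hθ]
      field_simp
    have h1 : T ^ 2 ≤ (‖W‖ * ‖u‖) ^ 2 := pow_le_pow_left₀ hT0 hTle 2
    have h2 : (‖W‖ * ‖u‖) ^ 2 = ‖W‖ ^ 2 * lam := by rw [hlamdef]; ring
    have h3 : ‖W‖ ^ 2 * lam ≤ (T + CC * T ^ 2) * lam := mul_le_mul_of_nonneg_right hreW hlam0
    calc T ^ 2 ≤ ‖W‖ ^ 2 * lam := h2 ▸ h1
      _ ≤ (T + CC * T ^ 2) * lam := h3
      _ = T * lam + (CC * lam) * T ^ 2 := by ring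
      _ = T * lam + (s / 2) * T ^ 2 := by rw [hCClam]
  have hT3 : T * (1 - s / 2) ≤ lam := arith1 hT2 hTpos
  have hT2lam : T ≤ 2 * lam := arith2 hT3 hs1 hT0
  have hslamnn : 0 ≤ s * lam := mul_nonneg hs.le hlam0
  have hN1 : (1:ℝ) ≤ (A.card : ℝ) := by
    have h1 : 0 < A.card := Finset.card_pos.mpr ⟨j₀, hj₀⟩
    exact_mod_cast h1
  have hsum : ∑ j ∈ A, (h j - s * lam) = T - A.card * (s * lam) := by
    rw [Finset.sum_sub_distrib, Finset.sum_const, nsmul_eq_mul, ← hTdef]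
  rw [hsum]
  have p1 : (s/2) * T ≤ s * lam := arith3 hT2lam hs.le
  have p2 : s * lam ≤ (A.card : ℝ) * (s * lam) := le_mul_of_one_le_left hslamnn hN1
  linarith [hT3, p1, p2]

/-- Theorem 5 (all-but-one entropic uncertainty relation): for any density matrix `ρ`
on n qubits, any distribution `PJ` of the measurement choice `J`, and any
`0 < ε < δ/4`, there is a joint distribution `p` of `(J, J', X, Ψ)` such that:
the marginal of `(J, X)` is `PJ j · Q^j(x)`; `J` and `J'` are independent;
`Pr[Ψ] ≥ 1 - 2·2^{-εn}`; and for all `j ≠ j'` with `Pr[J=j, J'=j', Ψ] > 0`,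
`max_x Pr[X=x | J=j, J'=j', Ψ] ≤ 2·2^{-(δ/2-2ε)n}`. -/
theorem stmt5 {n m : ℕ} (hm : 2 ≤ m)
    (B : Fin m → OrthonormalBasis (Fin n → Bool) ℂ (EuclideanSpace ℂ (Fin n → Bool)))
    (c : ℝ)
    (hc : ∀ j k : Fin m, j < k → ∀ x y, ‖(inner ℂ (B j x) (B k y) : ℂ)‖ ≤ c)
    (ρ : Matrix (Fin n → Bool) (Fin n → Bool) ℂ)
    (hρ : ρ.PosSemidef) (htr : ρ.trace = 1)
    (PJ : Fin m → ℝ) (hPJ : ∀ j, 0 ≤ PJ j) (hPJ1 : ∑ j, PJ j = 1)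
    (ε : ℝ) (hε0 : 0 < ε) (hε : ε < logOverlap n c / 4) :
    ∃ p : Fin m → Fin m → (Fin n → Bool) → Bool → ℝ,
      -- `p` is a probability distribution on (J, J', X, Ψ)
      (∀ j j' x ψ, 0 ≤ p j j' x ψ) ∧
      (∑ j, ∑ j', ∑ x, ∑ ψ, p j j' x ψ) = 1 ∧
      -- (1) the marginal of (J, X) is the prescribed one
      (∀ j x, ∑ j', ∑ ψ, p j j' x ψ = PJ j * outcomeProb B ρ j x) ∧
      -- (2) J and J' are independent
      (∀ j j', ∑ x, ∑ ψ, p j j' x ψ = PJ j * ∑ j₀, ∑ x, ∑ ψ, p j₀ j' x ψ) ∧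
      -- (3) Pr[Ψ] ≥ 1 - 2·2^{-εn}
      (1 - 2 * (2 : ℝ) ^ (-(ε * (n : ℝ))) ≤ ∑ j, ∑ j', ∑ x, p j j' x true) ∧
      -- (4) min-entropy bound whenever j ≠ j' and Pr[J=j, J'=j', Ψ] > 0
      (∀ j j', j ≠ j' → (0 < ∑ x, p j j' x true) →
        ∀ x, p j j' x true ≤
          2 * (2 : ℝ) ^ (-((logOverlap n c / 2 - 2 * ε) * (n : ℝ))) *
            ∑ x', p j j' x' true) := by
  classical
  -- symmetric overlap bound
  have hcB : ∀ j k : Fin m, j ≠ k → ∀ x y, ‖(inner ℂ (B j x) (B k y) : ℂ)‖ ≤ c := by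
    intro j k hjk x y
    rcases lt_or_gt_of_ne hjk with hlt | hgt
    · exact hc j k hlt x y
    · rw [norm_inner_symm]
      exact hc k j hgt y x
  -- c is positive
  have hc0 : 0 < c := by
    by_contra hcn
    push_neg at hcn
    set j1 : Fin m := ⟨0, by omega⟩
    set j2 : Fin m := ⟨1, by omega⟩
    have hj12 : j1 ≠ j2 := by
      intro hcontra
      have h01 : (0 : ℕ) = 1 := congrArg Fin.val hcontra
      omega
    set y0 : Fin n → Bool := fun _ => false
    have hz : ∀ x, ‖(inner ℂ (B j1 x) (B j2 y0) : ℂ)‖ ^ 2 = 0 := by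
      intro x
      have h1 := hcB j1 j2 hj12 x y0
      have h2 : ‖(inner ℂ (B j1 x) (B j2 y0) : ℂ)‖ = 0 :=
        le_antisymm (h1.trans hcn) (norm_nonneg _)
      rw [h2]; norm_num
    have hpar := parseval' (B j1) (B j2 y0)
    rw [Finset.sum_congr rfl fun x _ => hz x, Finset.sum_const_zero] at hpar
    have hn1 : ‖B j2 y0‖ = 1 := (B j2).orthonormal.1 y0
    rw [hn1] at hpar
    norm_num at hpar
  -- n is positive
  have hδpos : 0 < logOverlap n c := by linarith
  have hn0 : (n : ℝ) ≠ 0 := by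
    intro hcontra
    rw [logOverlap, hcontra] at hδpos
    norm_num at hδpos
  set s : ℝ := (2 : ℝ) ^ (-(ε * (n : ℝ))) with hsdef
  have hs0 : 0 < s := Real.rpow_pos_of_pos two_pos _
  have hnpos : 0 < (n : ℝ) := lt_of_le_of_ne (Nat.cast_nonneg n) (Ne.symm hn0)
  have hs1 : s < 1 := by
    apply Real.rpow_lt_one_of_one_lt_of_neg one_lt_two
    have := mul_pos hε0 hnpos
    linarith
  set θ : ℝ := 2 * c / s with hθdef
  have hθ0 : 0 < θ := by rw [hθdef]; positivity
  -- the key constant identity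
  have hδn : logOverlap n c * (n : ℝ) = -(2 * Real.logb 2 c) := by
    rw [logOverlap, Real.logb_pow]
    field_simp
    push_cast; ring
  have hkey : (2 : ℝ) ^ (-((logOverlap n c / 2 - 2 * ε) * (n : ℝ))) = c / s ^ 2 := by
    have e1 : -((logOverlap n c / 2 - 2 * ε) * (n : ℝ))
        = Real.logb 2 c + 2 * (ε * (n : ℝ)) := by linear_combination (-(1:ℝ)/2) * hδn
    rw [e1, Real.rpow_add two_pos, Real.rpow_logb two_pos (by norm_num) hc0]
    have hs2 : s ^ 2 = (2 : ℝ) ^ (-(ε * (n : ℝ)) * 2) := by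
      rw [hsdef, ← Real.rpow_natCast ((2:ℝ) ^ (-(ε * (n : ℝ)))) 2,
        ← Real.rpow_mul (by norm_num)]
      norm_num
    rw [hs2, div_eq_mul_inv, ← Real.rpow_neg (by norm_num)]
    congr 1
    ring
  -- decompose ρ
  obtain ⟨A, hA⟩ : ∃ A : Matrix (Fin n → Bool) (Fin n → Bool) ℂ, ρ = Aᴴ * A := by
    open scoped MatrixOrder in
    exact CStarAlgebra.nonneg_iff_eq_star_mul_self.mp hρ.nonneg
  set u : (Fin n → Bool) → EuclideanSpace ℂ (Fin n → Bool) :=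
    fun i => WithLp.toLp 2 (fun k => (starRingEnd ℂ) (A i k)) with hudef
  set q : (Fin n → Bool) → Fin m → (Fin n → Bool) → ℝ :=
    fun i j x => ‖(inner ℂ (B j x) (u i) : ℂ)‖ ^ 2 with hqdef
  set lam : (Fin n → Bool) → ℝ := fun i => ‖u i‖ ^ 2 with hlamdef
  have hq0 : ∀ i j x, 0 ≤ q i j x := fun i j x => by rw [hqdef]; positivity
  have hlam0 : ∀ i, 0 ≤ lam i := fun i => by rw [hlamdef]; positivity
  have hPar : ∀ i j, ∑ x, q i j x = lam i := fun i j => parseval' (B j) (u i)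
  have hconj : ∀ i j x, (inner ℂ (B j x) (u i) : ℂ)
      = (starRingEnd ℂ) ((A.mulVec (fun k => B j x k)) i) := by
    intro i j x
    rw [PiLp.inner_apply, Matrix.mulVec, dotProduct, map_sum]
    refine Finset.sum_congr rfl fun k _ => ?_
    rw [hudef]
    simp only [RCLike.inner_apply, PiLp.toLp_apply]
    rw [_root_.map_mul]
  have hE1 : ∀ j x, outcomeProb B ρ j x = ∑ i, q i j x := by
    intro j x
    set vv : (Fin n → Bool) → ℂ := fun k => B j x k with hvvdef
    have hout : outcomeProb B ρ j x
        = (dotProduct (star vv) (ρ.mulVec vv)).re := rfl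
    have h1 : dotProduct (star vv) ((Aᴴ * A).mulVec vv)
        = dotProduct (star (A.mulVec vv)) (A.mulVec vv) := by
      rw [← Matrix.mulVec_mulVec, dotProduct_mulVec, ← Matrix.star_mulVec]
    rw [hout, hA, h1, dotProduct, Complex.re_sum]
    refine Finset.sum_congr rfl fun i _ => ?_
    have h3 : q i j x = ‖(A.mulVec (fun k => B j x k)) i‖ ^ 2 := by
      rw [hqdef]
      dsimp only
      rw [hconj i j x, RCLike.norm_conj]
    rw [h3]
    have h2 : (star (A.mulVec vv)) i
        = (starRingEnd ℂ) ((A.mulVec vv) i) := rfl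
    rw [h2, ← Complex.normSq_eq_conj_mul_self, Complex.ofReal_re,
      Complex.normSq_eq_norm_sq]
  -- total weight is 1
  have hlamexp : ∀ i, lam i = ∑ x, ‖A i x‖ ^ 2 := by
    intro i
    rw [hlamdef]
    dsimp only
    rw [EuclideanSpace.norm_eq, Real.sq_sqrt (Finset.sum_nonneg fun k _ => sq_nonneg _)]
    refine Finset.sum_congr rfl fun k _ => ?_
    rw [hudef]
    dsimp only
    rw [RCLike.norm_conj]
  have hlam1 : ∑ i, lam i = 1 := by
    have htr2 : ((∑ i, lam i : ℝ) : ℂ) = ρ.trace := by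
      rw [hA, Matrix.trace]
      push_cast
      have hdiag2 : ∀ x, (Aᴴ * A).diag x = ∑ i, ((‖A i x‖ ^ 2 : ℝ) : ℂ) := by
        intro x
        rw [Matrix.diag, Matrix.mul_apply]
        refine Finset.sum_congr rfl fun i _ => ?_
        rw [Matrix.conjTranspose_apply]
        have hst : star (A i x) = (starRingEnd ℂ) (A i x) := rfl
        rw [hst, ← Complex.normSq_eq_conj_mul_self,
          Complex.normSq_eq_norm_sq]
      rw [Finset.sum_congr rfl fun x _ => hdiag2 x, Finset.sum_comm]
      refine Finset.sum_congr rfl fun i _ => ?_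
      rw [hlamexp i]
      push_cast
      rfl
    rw [htr] at htr2
    exact_mod_cast htr2
  -- heavy mass function
  set hwt : (Fin n → Bool) → Fin m → ℝ := fun i j =>
    ∑ x ∈ univ.filter (fun x => θ * lam i < q i j x), q i j x with hhwtdef
  have hcore : ∀ i, ∑ j, max (hwt i j - s * lam i) 0 ≤ lam i := fun i =>
    core_lemma B c s θ hc0 hs0 hs1.le hθdef hcB (u i) (q i) (fun j x => rfl) (lam i) rfl
  set j0 : Fin m := ⟨0, by omega⟩ with hj0def
  set R : (Fin n → Bool) → Fin m → ℝ := fun i j =>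
    max (hwt i j - s * lam i) 0 +
      if j = j0 then lam i - ∑ k, max (hwt i k - s * lam i) 0 else 0 with hRdef
  have hR0 : ∀ i j, 0 ≤ R i j := by
    intro i j
    simp only [hRdef]
    have h1 : 0 ≤ max (hwt i j - s * lam i) 0 := le_max_right _ _
    have h2 : 0 ≤ lam i - ∑ k, max (hwt i k - s * lam i) 0 := by linarith [hcore i]
    split_ifs <;> linarith
  have hRsum : ∀ i, ∑ j, R i j = lam i := by
    intro i
    simp only [hRdef]
    rw [Finset.sum_add_distrib,
      Finset.sum_ite_eq' univ j0 (fun _ => lam i - ∑ k, max (hwt i k - s * lam i) 0)]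
    simp only [mem_univ, if_true]
    ring
  have hRj : ∀ i j, hwt i j - s * lam i ≤ R i j := by
    intro i j
    simp only [hRdef]
    have h1 : hwt i j - s * lam i ≤ max (hwt i j - s * lam i) 0 := le_max_left _ _
    have h2 : 0 ≤ lam i - ∑ k, max (hwt i k - s * lam i) 0 := by linarith [hcore i]
    split_ifs <;> linarith
  -- instantiate the per-component kernels
  have hcomp : ∀ (i : Fin n → Bool) (j : Fin m),
      ∃ P : Fin m → (Fin n → Bool) → Bool → ℝ,
      (∀ j' x ψ, 0 ≤ P j' x ψ) ∧
      (∀ x, ∑ j', ∑ ψ, P j' x ψ = q i j x) ∧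
      (∀ j', ∑ x, ∑ ψ, P j' x ψ = R i j') ∧
      (∑ j', ∑ x, P j' x false ≤ 2 * s * lam i) ∧
      (∀ j', j' ≠ j → ∀ x,
        s * P j' x true ≤ θ * ∑ x', P j' x' true) := by
    intro i j
    have h0 := comp_lemma (fun x => q i j x) (fun x => hq0 i j x)
      (univ.filter (fun x => θ * lam i < q i j x)) (R i) j s θ hs0 hθ0
      (by intro x hx; rw [hPar i j]; exact (Finset.mem_filter.mp hx).2)
      (by
        intro x hx
        rw [hPar i j]
        by_contra hlt
        push_neg at hlt
        exact hx (Finset.mem_filter.mpr ⟨Finset.mem_univ x, hlt⟩))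
      (hR0 i)
      (by rw [hPar i j]; exact hRsum i)
      (by rw [hPar i j]; exact hRj i j)
    obtain ⟨P, hP0, hP1, hP2, hP3, hP4⟩ := h0
    rw [hPar i j] at hP3
    exact ⟨P, hP0, hP1, hP2, hP3, hP4⟩
  choose P hP using hcomp
  -- marginal computations
  have hmarg : ∀ j x, ∑ j', ∑ ψ, (PJ j * ∑ i, P i j j' x ψ)
      = PJ j * outcomeProb B ρ j x := by
    intro j x
    rw [hE1 j x, Finset.mul_sum]
    have h1 : ∀ j', ∑ ψ, (PJ j * ∑ i, P i j j' x ψ)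
        = ∑ i, ∑ ψ, (PJ j * P i j j' x ψ) := by
      intro j'
      rw [Finset.sum_comm]
      exact Finset.sum_congr rfl fun ψ _ => Finset.mul_sum _ _ _
    rw [Finset.sum_congr rfl fun j' _ => h1 j', Finset.sum_comm]
    refine Finset.sum_congr rfl fun i _ => ?_
    have h2 : ∑ j', ∑ ψ, (PJ j * P i j j' x ψ) = PJ j * ∑ j', ∑ ψ, P i j j' x ψ := by
      rw [Finset.mul_sum]
      exact Finset.sum_congr rfl fun j' _ => (Finset.mul_sum _ _ _).symm
    rw [h2, (hP i j).2.1 x]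
  have hmargJ : ∀ j j', ∑ x, ∑ ψ, (PJ j * ∑ i, P i j j' x ψ)
      = PJ j * ∑ i, R i j' := by
    intro j j'
    have h1 : ∀ x, ∑ ψ, (PJ j * ∑ i, P i j j' x ψ)
        = ∑ i, ∑ ψ, (PJ j * P i j j' x ψ) := by
      intro x
      rw [Finset.sum_comm]
      exact Finset.sum_congr rfl fun ψ _ => Finset.mul_sum _ _ _
    rw [Finset.sum_congr rfl fun x _ => h1 x, Finset.sum_comm, Finset.mul_sum]
    refine Finset.sum_congr rfl fun i _ => ?_
    have h2 : ∑ x, ∑ ψ, (PJ j * P i j j' x ψ) = PJ j * ∑ x, ∑ ψ, P i j j' x ψ := by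
      rw [Finset.mul_sum]
      exact Finset.sum_congr rfl fun x _ => (Finset.mul_sum _ _ _).symm
    rw [h2, (hP i j).2.2.1 j']
  refine ⟨fun j j' x ψ => PJ j * ∑ i, P i j j' x ψ, ?_, ?_, ?_, ?_, ?_, ?_⟩
  · -- nonnegativity
    intro j j' x ψ
    exact mul_nonneg (hPJ j) (Finset.sum_nonneg fun i _ => (hP i j).1 j' x ψ)
  · -- total mass 1
    have h1 : ∀ j : Fin m, ∑ j', ∑ x, ∑ ψ, (PJ j * ∑ i, P i j j' x ψ)
        = ∑ x, ∑ j', ∑ ψ, (PJ j * ∑ i, P i j j' x ψ) := fun j => Finset.sum_comm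
    rw [Finset.sum_congr rfl fun j _ => h1 j]
    have h2 : ∀ j, ∑ x, ∑ j', ∑ ψ, (PJ j * ∑ i, P i j j' x ψ)
        = PJ j * ∑ x, outcomeProb B ρ j x := by
      intro j
      rw [Finset.mul_sum]
      exact Finset.sum_congr rfl fun x _ => hmarg j x
    rw [Finset.sum_congr rfl fun j _ => h2 j]
    have h3 : ∀ j, ∑ x, outcomeProb B ρ j x = 1 := by
      intro j
      rw [Finset.sum_congr rfl fun x _ => hE1 j x, Finset.sum_comm]
      rw [Finset.sum_congr rfl fun i _ => hPar i j]
      exact hlam1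
    rw [Finset.sum_congr rfl fun j _ => by rw [h3 j, mul_one]]
    exact hPJ1
  · -- marginal of (J, X)
    exact hmarg
  · -- independence
    intro j j'
    rw [hmargJ j j', Finset.sum_congr rfl fun j₀ _ => hmargJ j₀ j', ← Finset.sum_mul,
      hPJ1, one_mul]
  · -- probability of Ψ
    have htot : ∀ i j, ∑ j', ∑ x, ∑ ψ, P i j j' x ψ = lam i := by
      intro i j
      rw [Finset.sum_congr rfl fun j' _ => (hP i j).2.2.1 j']
      exact hRsum i
    have htrue : ∀ i j, (1 - 2 * s) * lam i ≤ ∑ j', ∑ x, P i j j' x true := by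
      intro i j
      have h1 := htot i j
      have hb : ∀ (f : Bool → ℝ), (∑ ψ, f ψ) = f true + f false := fun f => by
        simp [Fintype.sum_bool]
      have h2 : ∑ j', ∑ x, (P i j j' x true + P i j j' x false) = lam i := by
        rw [← h1]
        exact Finset.sum_congr rfl fun j' _ => Finset.sum_congr rfl fun x _ => (hb _).symm
      rw [Finset.sum_congr rfl fun j' _ => Finset.sum_add_distrib,
        Finset.sum_add_distrib] at h2
      have h3 := (hP i j).2.2.2.1
      have h4 := hlam0 i
      nlinarith [mul_nonneg hs0.le h4]
    have h5 : ∀ j, ∑ j', ∑ x, (PJ j * ∑ i, P i j j' x true)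
        = PJ j * ∑ i, ∑ j', ∑ x, P i j j' x true := by
      intro j
      have hA1 : ∀ j', ∑ x, (PJ j * ∑ i, P i j j' x true)
          = ∑ i, ∑ x, (PJ j * P i j j' x true) := by
        intro j'
        rw [Finset.sum_comm]
        exact Finset.sum_congr rfl fun x _ => Finset.mul_sum _ _ _
      rw [Finset.sum_congr rfl fun j' _ => hA1 j', Finset.sum_comm, Finset.mul_sum]
      refine Finset.sum_congr rfl fun i _ => ?_
      rw [Finset.mul_sum]
      refine Finset.sum_congr rfl fun j' _ => ?_
      exact (Finset.mul_sum _ _ _).symm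
    rw [Finset.sum_congr rfl fun j _ => h5 j]
    have h6 : ∀ j, (1 - 2 * s) ≤ ∑ i, ∑ j', ∑ x, P i j j' x true := by
      intro j
      calc 1 - 2 * s = ∑ i, (1 - 2 * s) * lam i := by
            rw [← Finset.mul_sum, hlam1, mul_one]
        _ ≤ ∑ i, ∑ j', ∑ x, P i j j' x true := Finset.sum_le_sum fun i _ => htrue i j
    calc 1 - 2 * s = ∑ j, PJ j * (1 - 2 * s) := by rw [← Finset.sum_mul, hPJ1, one_mul]
      _ ≤ ∑ j, PJ j * ∑ i, ∑ j', ∑ x, P i j j' x true :=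
          Finset.sum_le_sum fun j _ => mul_le_mul_of_nonneg_left (h6 j) (hPJ j)
  · -- flatness
    intro j j' hjj' _hpos x
    rw [hkey]
    have h4 : s * ∑ i, P i j j' x true ≤ θ * ∑ i, ∑ x', P i j j' x' true := by
      rw [Finset.mul_sum, Finset.mul_sum]
      exact Finset.sum_le_sum fun i _ => (hP i j).2.2.2.2 j' (Ne.symm hjj') x
    have h5 : ∑ i, ∑ x', P i j j' x' true = ∑ x', ∑ i, P i j j' x' true :=
      Finset.sum_comm
    have h6 : ∑ x', (PJ j * ∑ i, P i j j' x' true)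
        = PJ j * ∑ x', ∑ i, P i j j' x' true := (Finset.mul_sum _ _ _).symm
    rw [h6]
    have h7 : ∑ i, P i j j' x true ≤ 2 * (c / s ^ 2) * ∑ x', ∑ i, P i j j' x' true := by
      rw [← h5]
      have h8 : s * ∑ i, P i j j' x true ≤ (2 * c / s) * ∑ i, ∑ x', P i j j' x' true := by
        rw [← hθdef]
        exact h4
      rw [show 2 * (c / s ^ 2) = (2 * c / s) / s by field_simp]
      rw [div_mul_eq_mul_div, le_div_iff₀ hs0]
      linarith [h8]
    calc PJ j * ∑ i, P i j j' x true
        ≤ PJ j * (2 * (c / s ^ 2) * ∑ x', ∑ i, P i j j' x' true) :=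
          mul_le_mul_of_nonneg_left h7 (hPJ j)
      _ = 2 * (c / s ^ 2) * (PJ j * ∑ x', ∑ i, P i j j' x' true) := by ring
end

section
/- Let 𝒳 be a finite set, let (J,X) be a pair of random variables with joint distribution P_{JX} on {1,…,m} × 𝒳 such that P_J(j) > 0 for every j, and let ℰ ⊆ {1,…,m} × 𝒳 be an event such that Σ_{j=1}^m Pr[ℰ | J=j] = m − 1. Then there exists a joint distribution of (J, J', X) on {1,…,m} × {1,…,m} × 𝒳 whose marginal on (J,X) equals P_{JX} and such that: (1) J and J' are independent; (2) the event J ≠ J' coincides with ℰ, i.e., Pr[J' ≠ J | J=j, X=x] = 1 whenever (j,x) ∈ ℰ and P_{JX}(j,x) > 0, and Pr[J' ≠ J | J=j, X=x] = 0 whenever (j,x) ∉ ℰ and P_{JX}(j,x) > 0; (3) the marginal of J' satisfies P_{J'}(j') = Pr[¬ℰ | J=j'] for all j'; and (4) conditioned on ℰ, X ↔ J ↔ J' forms a Markov chain (i.e., given ℰ and J, the variables X and J' are conditionally independent). -/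
/-- Existence of the virtual guess `J'`: given a joint distribution `P` of `(J, X)` on
`{1,…,m} × 𝒳` with all marginals `P_J(j) > 0`, and an event `E` with
`∑ j Pr[E | J=j] = m - 1`, there is a joint distribution `q` of `(J, J', X)` whose
marginal on `(J, X)` is `P`, such that `J` and `J'` are independent, the event
`J ≠ J'` coincides with `E`, the marginal of `J'` satisfies
`P_{J'}(j') = Pr[¬E | J=j']`, and, conditioned on `E`, `X ↔ J ↔ J'` is a Markov
chain. -/
theorem stmt6 {m : ℕ} {𝒳 : Type*} [Fintype 𝒳] [DecidableEq 𝒳]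
    (P : Fin m → 𝒳 → ℝ) (hP : ∀ j x, 0 ≤ P j x)
    (hsum : ∑ j, ∑ x, P j x = 1)
    (hPJ : ∀ j, 0 < ∑ x, P j x)
    (E : Finset (Fin m × 𝒳))
    (hE : ∑ j, (∑ x ∈ Finset.univ.filter (fun x => (j, x) ∈ E), P j x) /
            (∑ x, P j x) = (m : ℝ) - 1) :
    ∃ q : Fin m → Fin m → 𝒳 → ℝ,
      (∀ j j' x, 0 ≤ q j j' x) ∧
      -- the marginal on (J, X) is P
      (∀ j x, ∑ j', q j j' x = P j x) ∧
      -- (1) J and J' are independent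
      (∀ j j', ∑ x, q j j' x = (∑ x, P j x) * (∑ j₀, ∑ x, q j₀ j' x)) ∧
      -- (2) the event J ≠ J' coincides with E
      (∀ j x, (j, x) ∈ E → 0 < P j x →
        ∑ j' ∈ Finset.univ.filter (fun j' => j' ≠ j), q j j' x = P j x) ∧
      (∀ j x, (j, x) ∉ E → 0 < P j x →
        ∑ j' ∈ Finset.univ.filter (fun j' => j' ≠ j), q j j' x = 0) ∧
      -- (3) the marginal of J' is j' ↦ Pr[¬E | J = j']
      (∀ j', ∑ j, ∑ x, q j j' x =
        (∑ x ∈ Finset.univ.filter (fun x => (j', x) ∉ E), P j' x) /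
          (∑ x, P j' x)) ∧
      -- (4) conditioned on E, X ↔ J ↔ J' is a Markov chain
      (∀ j j' x, (j, x) ∈ E →
        q j j' x * (∑ x' ∈ Finset.univ.filter (fun x' => (j, x') ∈ E), P j x') =
          P j x * (∑ x' ∈ Finset.univ.filter (fun x' => (j, x') ∈ E), q j j' x')) := by
  classical
  -- abbreviations
  set S : Fin m → ℝ := fun j => ∑ x, P j x with hSdef
  set Bf : Fin m → ℝ := fun j => ∑ x ∈ Finset.univ.filter (fun x => (j, x) ∈ E), P j x
    with hBdef
  set Nf : Fin m → ℝ := fun j => ∑ x ∈ Finset.univ.filter (fun x => ¬ (j, x) ∈ E), P j x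
    with hNdef
  have hBN : ∀ j, Bf j + Nf j = S j := fun j => by
    simpa using Finset.sum_filter_add_sum_filter_not Finset.univ (fun x => (j, x) ∈ E) (P j)
  have hSpos : ∀ j, 0 < S j := hPJ
  have hB0 : ∀ j, 0 ≤ Bf j := fun j => Finset.sum_nonneg fun x _ => hP j x
  have hN0 : ∀ j, 0 ≤ Nf j := fun j => Finset.sum_nonneg fun x _ => hP j x
  set A : Fin m → ℝ := fun j => Nf j / S j with hAdef
  have hA0 : ∀ j, 0 ≤ A j := fun j => div_nonneg (hN0 j) (hSpos j).le
  have hA1 : ∀ j, A j ≤ 1 := fun j =>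
    div_le_one_of_le₀ (by linarith [hBN j, hB0 j]) (hSpos j).le
  have hNS : ∀ j, Nf j = S j * A j := fun j => by
    rw [hAdef]
    rw [mul_comm, div_mul_cancel₀ _ (hSpos j).ne']
  have hBS : ∀ j, Bf j = S j * (1 - A j) := fun j => by
    linear_combination hBN j - hNS j
  have hE' : ∑ j, Bf j / S j = (m : ℝ) - 1 := hE
  have hAsum : ∑ j, A j = 1 := by
    have h : ∑ j, (A j + Bf j / S j) = ∑ j : Fin m, (1 : ℝ) := by
      refine Finset.sum_congr rfl fun j _ => ?_
      have h1 := hBN j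
      have h2 := (hSpos j).ne'
      rw [hAdef]
      field_simp
      linarith
    rw [Finset.sum_add_distrib, hE'] at h
    simp only [Finset.sum_const, Finset.card_univ, Fintype.card_fin, nsmul_eq_mul,
      mul_one] at h
    linarith
  -- consequences of A j = 1
  have hBzero : ∀ j, A j = 1 → Bf j = 0 := by
    intro j hj
    have : Nf j = S j := by
      have := hNS j; rw [hj, mul_one] at this; exact this
    linarith [hBN j]
  have hPE0 : ∀ j x, (j, x) ∈ E → A j = 1 → P j x = 0 := by
    intro j x hx hj
    have hle : P j x ≤ Bf j := by
      refine Finset.single_le_sum (fun y _ => hP j y) ?_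
      simp [hx]
    have := hBzero j hj
    linarith [hP j x]
  have hArest : ∀ j, ∑ j' ∈ Finset.univ.filter (fun j' => j' ≠ j), A j' = 1 - A j := by
    intro j
    rw [Finset.filter_ne', Finset.sum_erase_eq_sub (Finset.mem_univ j), hAsum]
  have hAzero : ∀ j j', A j = 1 → j' ≠ j → A j' = 0 := by
    intro j j' hj hne
    have h0 : ∑ j'' ∈ Finset.univ.filter (fun j'' => j'' ≠ j), A j'' = 0 := by
      rw [hArest j, hj]; ring
    have := (Finset.sum_eq_zero_iff_of_nonneg (fun k _ => hA0 k)).mp h0 j' (by simp [hne])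
    exact this
  -- the kernel w
  set w : Fin m → Fin m → ℝ := fun j j' => if j' = j then 0 else A j' / (1 - A j) with hwdef
  have hw0 : ∀ j j', 0 ≤ w j j' := by
    intro j j'
    rw [hwdef]
    by_cases h : j' = j
    · simp [h]
    · simp only [h, if_false]
      exact div_nonneg (hA0 j') (by linarith [hA1 j])
  have hwrest : ∀ j, ∑ j' ∈ Finset.univ.filter (fun j' => j' ≠ j), w j j' =
      (1 - A j) / (1 - A j) := by
    intro j
    have h : ∑ j' ∈ Finset.univ.filter (fun j' => j' ≠ j), w j j' =
        (∑ j' ∈ Finset.univ.filter (fun j' => j' ≠ j), A j') / (1 - A j) := by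
      rw [Finset.sum_div]
      refine Finset.sum_congr rfl fun j' hj' => ?_
      have hne : j' ≠ j := by simpa using hj'
      simp [hwdef, hne]
    rw [h, hArest]
  have hwsum : ∀ j, ∑ j', w j j' = (1 - A j) / (1 - A j) := by
    intro j
    rw [← hwrest j]
    symm
    refine Finset.sum_filter_of_ne fun j' _ h => ?_
    intro hj'
    apply h
    simp [hwdef, hj']
  -- the construction
  set q : Fin m → Fin m → 𝒳 → ℝ :=
    fun j j' x => if (j, x) ∈ E then P j x * w j j' else if j' = j then P j x else 0 with hqdef
  have hqsplit : ∀ j j', ∑ x, q j j' x = Bf j * w j j' + (if j' = j then Nf j else 0) := by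
    intro j j'
    rw [hqdef]
    simp only
    rw [Finset.sum_ite]
    congr 1
    · rw [← Finset.sum_mul]
    · by_cases h : j' = j <;> simp [h, hNdef]
  have hM : ∀ j j', ∑ x, q j j' x = S j * A j' := by
    intro j j'
    rw [hqsplit]
    by_cases h : j' = j
    · subst h
      have hww : w j' j' = 0 := by simp [hwdef]
      rw [hww, mul_zero, zero_add, if_pos rfl]
      exact hNS j'
    · rw [if_neg h, add_zero]
      have hw : w j j' = A j' / (1 - A j) := by simp [hwdef, h]
      rw [hw, hBS j]
      by_cases hAj : A j = 1
      · rw [hAzero j j' hAj h, hAj]; ring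
      · have h1A : (1 : ℝ) - A j ≠ 0 := fun hc => hAj (by linarith)
        field_simp
        try ring
  have hT : ∀ j', ∑ j, ∑ x, q j j' x = A j' := by
    intro j'
    calc ∑ j, ∑ x, q j j' x = ∑ j, S j * A j' :=
          Finset.sum_congr rfl fun j _ => hM j j'
      _ = (∑ j, S j) * A j' := by rw [Finset.sum_mul]
      _ = A j' := by rw [hsum, one_mul]
  refine ⟨q, ?_, ?_, ?_, ?_, ?_, ?_, ?_⟩
  · intro j j' x
    rw [hqdef]
    by_cases h : (j, x) ∈ E
    · simp only [h, if_true]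
      exact mul_nonneg (hP j x) (hw0 j j')
    · by_cases h' : j' = j <;> simp [h, h', hP j x]
  · -- marginal over j'
    intro j x
    rw [hqdef]
    by_cases h : (j, x) ∈ E
    · simp only [h, if_true, ← Finset.mul_sum, hwsum j]
      by_cases hAj : A j = 1
      · rw [hPE0 j x h hAj]; ring
      · rw [div_self (by intro hc; apply hAj; linarith)]; ring
    · simp [h, Finset.sum_ite_eq', Finset.mem_univ]
  · -- independence
    intro j j'
    rw [hM j j', hT j']
  · -- J ≠ J' coincides with E, on E
    intro j x hx hpos
    have hterm : ∑ j' ∈ Finset.univ.filter (fun j' => j' ≠ j), q j j' x =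
        P j x * ∑ j' ∈ Finset.univ.filter (fun j' => j' ≠ j), w j j' := by
      rw [Finset.mul_sum]
      exact Finset.sum_congr rfl fun j' _ => by simp [hqdef, hx]
    rw [hterm, hwrest]
    have hle : P j x ≤ Bf j := by
      refine Finset.single_le_sum (fun y _ => hP j y) ?_
      simp [hx]
    have h1A : (1 : ℝ) - A j ≠ 0 := by
      intro hc
      have hB : Bf j = 0 := by rw [hBS j, hc, mul_zero]
      linarith
    rw [div_self h1A, mul_one]
  · -- J ≠ J' coincides with E, off E
    intro j x hx hpos
    refine Finset.sum_eq_zero fun j' hj' => ?_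
    have hne : j' ≠ j := by simpa using hj'
    simp [hqdef, hx, hne]
  · -- marginal of J'
    intro j'
    rw [hT j']
  · -- Markov chain on E
    intro j j' x hx
    have h0 : q j j' x = P j x * w j j' := by simp [hqdef, hx]
    have h1 : ∑ x' ∈ Finset.univ.filter (fun x' => (j, x') ∈ E), q j j' x' =
        Bf j * w j j' := by
      rw [Finset.sum_mul]
      refine Finset.sum_congr rfl fun x' hx' => ?_
      have hx'E : (j, x') ∈ E := by simpa using hx'
      simp [hqdef, hx'E]
    rw [h0, h1]
    ring
end

section
/- Let n, k and ℓ be positive integers, let 0 < β < 1/4, and let I ⊆ {1,…,n} with |I| ≥ k. Let F be drawn uniformly at random from the set of ℓ×n matrices over 𝔽₂. Then, except with probability at most 2^{2ℓ}·exp(−2kβ²) over the choice of F, it holds that |(f ⊙ g)_I| > (1/4 − β)·k for all f, g ∈ span(F)\{0}. -/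
open Finset Matrix
set_option maxHeartbeats 1000000

private noncomputable def gfun : ℝ → ℝ := fun x => x/4 - 1/4 + (3*Real.exp x + 1)⁻¹

private noncomputable def ffun : ℝ → ℝ :=
  fun x => x^2/8 - x/4 - Real.log (3 + Real.exp (-x)) + Real.log 4

private lemma hasDerivAt_gfun (x : ℝ) :
    HasDerivAt gfun (1/4 - 3*Real.exp x/(3*Real.exp x+1)^2) x := by
  have h0 : (3*Real.exp x + 1) ≠ 0 := by positivity
  have h1 : HasDerivAt (fun x : ℝ => 3*Real.exp x + 1) (3*Real.exp x) x := by
    simpa using ((Real.hasDerivAt_exp x).const_mul 3).add_const 1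
  have h2 := h1.inv h0
  have h3 : HasDerivAt (fun x : ℝ => x/4 - 1/4) (1/4) x := by
    simpa using ((hasDerivAt_id x).div_const 4).sub_const (1/4)
  have := h3.add h2
  convert this using 1 <;> try rfl
  field_simp
  ring

private lemma hasDerivAt_ffun (x : ℝ) : HasDerivAt ffun (gfun x) x := by
  have hpos : (0:ℝ) < 3 + Real.exp (-x) := by positivity
  have h1 : HasDerivAt (fun x : ℝ => Real.exp (-x)) (-Real.exp (-x)) x := by
    simpa [Function.comp_def] using (Real.hasDerivAt_exp (-x)).comp x (hasDerivAt_neg x)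
  have h2 : HasDerivAt (fun x : ℝ => 3 + Real.exp (-x)) (-Real.exp (-x)) x :=
    h1.const_add 3
  have h3 := h2.log (ne_of_gt hpos)
  have h4 : HasDerivAt (fun x : ℝ => x^2/8 - x/4) (x/4 - 1/4) x := by
    have := ((hasDerivAt_pow 2 x).div_const 8).sub ((hasDerivAt_id x).div_const 4)
    convert this using 1 <;> try rfl
    ring
  have h5 := (h4.sub h3).add_const (Real.log 4)
  convert h5 using 1 <;> try rfl
  unfold gfun
  have he : Real.exp (-x) = (Real.exp x)⁻¹ := Real.exp_neg x
  have hx : Real.exp x ≠ 0 := (Real.exp_pos x).ne'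
  rw [he]
  field_simp
  try ring

private lemma gfun_nonneg {x : ℝ} (hx : 0 ≤ x) : 0 ≤ gfun x := by
  have hmono : Monotone gfun := by
    apply monotone_of_deriv_nonneg
    · exact fun y => (hasDerivAt_gfun y).differentiableAt
    · intro y
      rw [(hasDerivAt_gfun y).deriv]
      have ht : (0:ℝ) < Real.exp y := Real.exp_pos y
      have hsq : (0:ℝ) < (3*Real.exp y + 1)^2 := by positivity
      have : 3*Real.exp y/(3*Real.exp y+1)^2 ≤ 1/4 := by
        rw [div_le_iff₀ hsq]
        nlinarith [sq_nonneg (3*Real.exp y - 1)]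
      linarith
  have h0 : gfun 0 = 0 := by
    unfold gfun; norm_num
  have := hmono hx
  rw [h0] at this
  linarith

private lemma ffun_nonneg {x : ℝ} (hx : 0 ≤ x) : 0 ≤ ffun x := by
  have hmono : MonotoneOn ffun (Set.Ici 0) := by
    apply monotoneOn_of_deriv_nonneg (convex_Ici 0)
    · exact (fun y _ => (hasDerivAt_ffun y).differentiableAt.continuousAt.continuousWithinAt)
    · intro y hy
      exact (hasDerivAt_ffun y).differentiableAt.differentiableWithinAt
    · intro y hy
      rw [(hasDerivAt_ffun y).deriv]
      rw [interior_Ici] at hy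
      exact gfun_nonneg (le_of_lt hy)
  have h0 : ffun 0 = 0 := by
    unfold ffun
    simp [Real.exp_zero]
    norm_num
  have := hmono (Set.self_mem_Ici) hx hx
  rw [h0] at this
  linarith

lemma hoeff_quarter {x : ℝ} (hx : 0 ≤ x) :
    3/4 + Real.exp (-x)/4 ≤ Real.exp (-(x/4) + x^2/8) := by
  have hf := ffun_nonneg hx
  unfold ffun at hf
  have hpos : (0:ℝ) < 3 + Real.exp (-x) := by positivity
  have hlog : Real.log (3 + Real.exp (-x)) ≤ x^2/8 - x/4 + Real.log 4 := by linarith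
  have := Real.exp_le_exp.mpr hlog
  rw [Real.exp_log hpos, Real.exp_add, Real.exp_log (by norm_num : (0:ℝ) < 4)] at this
  have h2 : Real.exp (-(x/4) + x^2/8) = Real.exp (x^2/8 - x/4) := by ring_nf
  rw [h2]
  linarith


lemma exists_dot_one {l : ℕ} (s t : Fin l → ZMod 2) (hs : s ≠ 0) (ht : t ≠ 0) :
    ∃ c : Fin l → ZMod 2, s ⬝ᵥ c = 1 ∧ t ⬝ᵥ c = 1 := by
  have hz : ∀ a : ZMod 2, a ≠ 0 → a = 1 := by decide
  obtain ⟨j2, hj2⟩ : ∃ j, t j ≠ 0 := by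
    by_contra h; push_neg at h; exact ht (funext fun j => h j)
  have ht2 : t j2 = 1 := hz _ hj2
  by_cases hs2 : s j2 = 1
  · refine ⟨Pi.single j2 1, ?_, ?_⟩ <;>
      simp [dotProduct_single, hs2, ht2]
  · have hs2' : s j2 = 0 := by
      rcases (by decide : ∀ a : ZMod 2, a = 0 ∨ a = 1) (s j2) with h | h
      · exact h
      · exact absurd h hs2
    obtain ⟨j3, hj3⟩ : ∃ j, s j ≠ 0 := by
      by_contra h; push_neg at h; exact hs (funext fun j => h j)
    have hs3 : s j3 = 1 := hz _ hj3
    by_cases ht3 : t j3 = 1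
    · refine ⟨Pi.single j3 1, ?_, ?_⟩ <;>
        simp [dotProduct_single, hs3, ht3]
    · have ht3' : t j3 = 0 := by
        rcases (by decide : ∀ a : ZMod 2, a = 0 ∨ a = 1) (t j3) with h | h
        · exact h
        · exact absurd h ht3
      have hne : j2 ≠ j3 := by
        intro h; rw [h] at ht2; exact ht3 ht2
      refine ⟨Pi.single j2 1 + Pi.single j3 1, ?_, ?_⟩ <;>
        simp [dotProduct_add, dotProduct_single, hs2', hs3, ht2, ht3']

lemma card_good_ge {l : ℕ} (s t : Fin l → ZMod 2) (hs : s ≠ 0) (ht : t ≠ 0) :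
    2^l ≤ 4 * (univ.filter (fun c : Fin l → ZMod 2 => s ⬝ᵥ c * (t ⬝ᵥ c) = 1)).card := by
  classical
  set fib : ZMod 2 × ZMod 2 → Finset (Fin l → ZMod 2) :=
    fun y => univ.filter (fun c => (s ⬝ᵥ c, t ⬝ᵥ c) = y) with hfib
  obtain ⟨c0, hc0s, hc0t⟩ := exists_dot_one s t hs ht
  have hle : ∀ y, (fib y).card ≤ (fib (1,1)).card := by
    intro y
    rcases (fib y).eq_empty_or_nonempty with h | ⟨c1, hc1⟩
    · simp [h]
    · have hc1' : (s ⬝ᵥ c1, t ⬝ᵥ c1) = y := by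
        simpa [hfib] using hc1
      apply Finset.card_le_card_of_injOn (fun x => x + c1 + c0)
      · intro x hx
        have hx' : (s ⬝ᵥ x, t ⬝ᵥ x) = y := by simpa [hfib] using hx
        simp only [hfib, Finset.mem_coe, mem_filter, mem_univ, true_and]
        have h1 : s ⬝ᵥ (x + c1 + c0) = s ⬝ᵥ x + s ⬝ᵥ c1 + s ⬝ᵥ c0 := by
          rw [dotProduct_add, dotProduct_add]
        have h2 : t ⬝ᵥ (x + c1 + c0) = t ⬝ᵥ x + t ⬝ᵥ c1 + t ⬝ᵥ c0 := by
          rw [dotProduct_add, dotProduct_add]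
        have hxs : s ⬝ᵥ x = y.1 := by rw [← hx']
        have hxt : t ⬝ᵥ x = y.2 := by rw [← hx']
        have hc1s : s ⬝ᵥ c1 = y.1 := by rw [← hc1']
        have hc1t : t ⬝ᵥ c1 = y.2 := by rw [← hc1']
        have haa : ∀ a : ZMod 2, a + a = 0 := by decide
        rw [Prod.mk.injEq, h1, h2, hxs, hxt, hc1s, hc1t, hc0s, hc0t, haa y.1, haa y.2]
        simp
      · intro x _ x' _ h
        simpa using congrArg (fun z => z + c0 + c1) h
  have hsum : ∑ y : ZMod 2 × ZMod 2, (fib y).card = 2^l := by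
    rw [← Finset.card_eq_sum_card_fiberwise (f := fun c => (s ⬝ᵥ c, t ⬝ᵥ c))
        (fun c _ => mem_univ _)]
    simp [Finset.card_univ]
  have h4 : ∑ y : ZMod 2 × ZMod 2, (fib y).card ≤ 4 * (fib (1,1)).card := by
    calc ∑ y : ZMod 2 × ZMod 2, (fib y).card
        ≤ ∑ _y : ZMod 2 × ZMod 2, (fib (1,1)).card := Finset.sum_le_sum (fun y _ => hle y)
      _ = 4 * (fib (1,1)).card := by
          rw [Finset.sum_const, Finset.card_univ]
          simp [mul_comm]
  have hfe : fib (1,1) = univ.filter (fun c : Fin l → ZMod 2 => s ⬝ᵥ c * (t ⬝ᵥ c) = 1) := by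
    apply Finset.filter_congr
    intro c _
    have : ∀ a b : ZMod 2, ((a, b) = ((1:ZMod 2), (1:ZMod 2))) ↔ (a * b = 1) := by decide
    exact (by simpa using this (s ⬝ᵥ c) (t ⬝ᵥ c))
  rw [hfe] at h4
  omega

private def colEquiv (l n : ℕ) : (Fin n → Fin l → ZMod 2) ≃ Matrix (Fin l) (Fin n) (ZMod 2) where
  toFun g := Matrix.of (fun r i => g i r)
  invFun F := fun i r => F r i
  left_inv g := rfl
  right_inv F := rfl

/-- Lemma 12: for `I ⊆ {1,…,n}` with `|I| ≥ k` and a uniformly random `ℓ×n` matrix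
`F` over 𝔽₂, except with probability at most `2^{2ℓ}·exp(−2kβ²)` it holds that
`|(f ⊙ g)_I| > (1/4 − β)·k` for all nonzero `f, g` in the row span of `F`.
The probability is expressed as (number of bad matrices) / 2^{ℓn}. -/
theorem stmt12 (n k l : ℕ) (hn : 0 < n) (hk : 0 < k) (hl : 0 < l)
    (β : ℝ) (hβ0 : 0 < β) (hβ : β < 1 / 4)
    (I : Finset (Fin n)) (hI : k ≤ I.card) :
    (Nat.card {F : Matrix (Fin l) (Fin n) (ZMod 2) //
        ¬ ∀ s t : Fin l → ZMod 2,
            Matrix.vecMul s F ≠ 0 → Matrix.vecMul t F ≠ 0 →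
            ((1 : ℝ) / 4 - β) * k <
              ((I.filter (fun i =>
                Matrix.vecMul s F i * Matrix.vecMul t F i = 1)).card : ℝ)} : ℝ)
      / 2 ^ (l * n)
    ≤ 2 ^ (2 * l) * Real.exp (-(2 * k * β ^ 2)) := by
  classical
  set θ : ℝ := ((1:ℝ)/4 - β) * k with hθ
  obtain ⟨J, hJI, hJk⟩ := Finset.exists_subset_card_eq hI
  have hkn : k ≤ n := by
    have := Finset.card_le_univ J
    simpa [hJk] using this
  set L : ℝ := 4*β with hLdef
  have hL0 : 0 ≤ L := by positivity
  set E : ℝ := 3/4 + Real.exp (-L)/4 with hEdef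
  have hE0 : 0 ≤ E := by positivity
  have hEX : E ≤ Real.exp (-(L/4) + L^2/8) := hoeff_quarter hL0
  set pred : Matrix (Fin l) (Fin n) (ZMod 2) → Prop := fun F =>
      ¬ ∀ s t : Fin l → ZMod 2,
            Matrix.vecMul s F ≠ 0 → Matrix.vecMul t F ≠ 0 →
            ((1 : ℝ) / 4 - β) * k <
              ((I.filter (fun i =>
                Matrix.vecMul s F i * Matrix.vecMul t F i = 1)).card : ℝ) with hpred
  have hNat : (Nat.card {F : Matrix (Fin l) (Fin n) (ZMod 2) // pred F})
      = (univ.filter pred).card := by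
    rw [Nat.card_eq_fintype_card, Fintype.card_subtype]
  set A : (Fin l → ZMod 2) → (Fin l → ZMod 2) → Finset (Matrix (Fin l) (Fin n) (ZMod 2)) :=
    fun s t => univ.filter (fun F =>
      ((J.filter (fun i => Matrix.vecMul s F i * Matrix.vecMul t F i = 1)).card : ℝ) ≤ θ)
    with hA
  set S : Finset (Fin l → ZMod 2) := univ.filter (fun s => s ≠ 0) with hS
  have hsub : univ.filter pred ⊆ (S ×ˢ S).biUnion (fun q => A q.1 q.2) := by
    intro F hF
    rw [Finset.mem_filter] at hF
    have hF' := hF.2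
    simp only [hpred] at hF'
    push_neg at hF'
    obtain ⟨s, t, hs, ht, hle⟩ := hF'
    have hs0 : s ≠ 0 := fun h => hs (by simp [h])
    have ht0 : t ≠ 0 := fun h => ht (by simp [h])
    apply Finset.mem_biUnion.mpr
    refine ⟨(s,t), Finset.mem_product.mpr ⟨by simp [hS, hs0], by simp [hS, ht0]⟩, ?_⟩
    simp only [hA, Finset.mem_filter, Finset.mem_univ, true_and]
    refine le_trans ?_ hle
    exact_mod_cast Finset.card_le_card (Finset.filter_subset_filter _ hJI)
  -- core bound on each A s t
  have hAbound : ∀ s t : Fin l → ZMod 2, s ≠ 0 → t ≠ 0 →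
      ((A s t).card : ℝ) ≤ 2^(l*n) * Real.exp (-(2*k*β^2)) := by
    intro s t hs0 ht0
    set w : (Fin l → ZMod 2) → ℝ :=
      fun c => if s ⬝ᵥ c * (t ⬝ᵥ c) = 1 then Real.exp (-L) else 1 with hw
    have hw0 : ∀ c, 0 < w c := by
      intro c
      simp only [hw]
      split_ifs
      · exact Real.exp_pos _
      · exact one_pos
    have hwsum : ∑ c, w c ≤ 2^l * E := by
      simp only [hw]
      rw [Finset.sum_ite, Finset.sum_const, Finset.sum_const]
      set a := (univ.filter (fun c : Fin l → ZMod 2 => s ⬝ᵥ c * (t ⬝ᵥ c) = 1)).card with ha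
      have hfn : (univ.filter (fun c : Fin l → ZMod 2 => ¬ (s ⬝ᵥ c * (t ⬝ᵥ c) = 1))).card
          = 2^l - a := by
        have := Finset.card_filter_add_card_filter_not
          (s := (univ : Finset (Fin l → ZMod 2)))
          (p := fun c => s ⬝ᵥ c * (t ⬝ᵥ c) = 1)
        have hcardu : (univ : Finset (Fin l → ZMod 2)).card = 2^l := by
          simp [Finset.card_univ]
        omega
      have hage : 2^l ≤ 4*a := card_good_ge s t hs0 ht0
      have hale : a ≤ 2^l := by
        have := Finset.card_filter_le (univ : Finset (Fin l → ZMod 2))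
          (fun c : Fin l → ZMod 2 => s ⬝ᵥ c * (t ⬝ᵥ c) = 1)
        have hcardu : (univ : Finset (Fin l → ZMod 2)).card = 2^l := by
          simp [Finset.card_univ]
        omega
      rw [hfn]
      have hcast : ((2^l - a : ℕ) : ℝ) = (2:ℝ)^l - a := by
        push_cast [Nat.cast_sub hale]
        ring
      rw [nsmul_eq_mul, nsmul_eq_mul, hcast]
      have he1 : Real.exp (-L) ≤ 1 := Real.exp_le_one_iff.mpr (by linarith)
      have hageR : (2:ℝ)^l ≤ 4*(a:ℝ) := by exact_mod_cast hage
      rw [hEdef]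
      nlinarith [Real.exp_pos (-L)]
    set cnt : Matrix (Fin l) (Fin n) (ZMod 2) → ℕ :=
      fun F => (J.filter (fun i => Matrix.vecMul s F i * Matrix.vecMul t F i = 1)).card
      with hcnt
    have hterm : ∀ F, Real.exp (-(L * cnt F)) = ∏ i ∈ J, w (fun r => F r i) := by
      intro F
      have hc : -(L * (cnt F : ℝ)) =
          ∑ i ∈ J, (if Matrix.vecMul s F i * Matrix.vecMul t F i = 1 then -L else 0) := by
        simp only [hcnt, Finset.card_filter]
        push_cast
        rw [Finset.mul_sum, ← Finset.sum_neg_distrib]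
        apply Finset.sum_congr rfl
        intro i _
        split_ifs <;> ring
      rw [hc, Real.exp_sum]
      apply Finset.prod_congr rfl
      intro i _
      have hcol : Matrix.vecMul s F i = s ⬝ᵥ (fun r => F r i) := rfl
      have hcol' : Matrix.vecMul t F i = t ⬝ᵥ (fun r => F r i) := rfl
      simp only [hw, hcol, hcol']
      split_ifs
      · rfl
      · exact Real.exp_zero
    have hstep1 : ((A s t).card : ℝ)
        ≤ ∑ F ∈ A s t, Real.exp (L*θ) * Real.exp (-(L * cnt F)) := by
      have : ((A s t).card : ℝ) = ∑ _F ∈ A s t, (1:ℝ) := by simp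
      rw [this]
      apply Finset.sum_le_sum
      intro F hF
      simp only [hA, Finset.mem_filter] at hF
      have hFle : ((cnt F : ℝ)) ≤ θ := hF.2
      rw [← Real.exp_add]
      exact Real.one_le_exp (by nlinarith)
    have hstep2 : ∑ F ∈ A s t, Real.exp (L*θ) * Real.exp (-(L * cnt F))
        ≤ ∑ F : Matrix (Fin l) (Fin n) (ZMod 2), Real.exp (L*θ) * Real.exp (-(L * cnt F)) :=
      Finset.sum_le_sum_of_subset_of_nonneg (Finset.subset_univ _)
        (fun F _ _ => by positivity)
    have hstep3 : ∑ F : Matrix (Fin l) (Fin n) (ZMod 2), Real.exp (L*θ) * Real.exp (-(L * cnt F))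
        = Real.exp (L*θ) * ((∑ c, w c)^k * ((2:ℝ)^l)^(n-k)) := by
      rw [← Finset.mul_sum]
      congr 1
      -- rewrite each summand as a product over all columns
      have hsummand : ∀ F : Matrix (Fin l) (Fin n) (ZMod 2),
          Real.exp (-(L * cnt F)) = ∏ i : Fin n,
            (if i ∈ J then w (fun r => F r i) else 1) := by
        intro F
        rw [hterm F]
        rw [Finset.prod_ite_mem]
        rw [Finset.univ_inter]
      rw [Finset.sum_congr rfl (fun F _ => hsummand F)]
      -- reindex: matrices as tuples of columns
      have hre : ∑ F : Matrix (Fin l) (Fin n) (ZMod 2),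
            ∏ i : Fin n, (if i ∈ J then w (fun r => F r i) else 1)
          = ∑ g : Fin n → Fin l → ZMod 2,
            ∏ i : Fin n, (if i ∈ J then w (g i) else 1) :=
        (Fintype.sum_equiv (colEquiv l n)
          (fun g : Fin n → Fin l → ZMod 2 => ∏ i : Fin n, (if i ∈ J then w (g i) else 1))
          (fun F : Matrix (Fin l) (Fin n) (ZMod 2) =>
            ∏ i : Fin n, (if i ∈ J then w (fun r => F r i) else 1))
          (fun g => rfl)).symm
      rw [hre]
      rw [← Fintype.prod_sum (fun (i : Fin n) (c : Fin l → ZMod 2) =>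
        if i ∈ J then w c else 1)]
      have hfac : ∀ i : Fin n, (∑ c, if i ∈ J then w c else 1)
          = if i ∈ J then (∑ c, w c) else (2:ℝ)^l := by
        intro i
        split_ifs
        · rfl
        · rw [Finset.sum_const, Finset.card_univ]
          simp [nsmul_eq_mul]
      rw [Finset.prod_congr rfl (fun i _ => hfac i)]
      rw [Finset.prod_ite, Finset.prod_const, Finset.prod_const]
      have h1 : (univ.filter (fun i : Fin n => i ∈ J)) = J := by
        rw [Finset.filter_mem_eq_inter, Finset.univ_inter]
      have h2 : (univ.filter (fun i : Fin n => ¬ i ∈ J)).card = n - k := by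
        rw [Finset.filter_not, Finset.filter_mem_eq_inter, Finset.univ_inter]
        rw [Finset.card_sdiff_of_subset (Finset.subset_univ _)]
        simp [hJk]
      rw [h1, h2, hJk]
    -- combine
    have hwsum0 : 0 ≤ ∑ c, w c := Finset.sum_nonneg (fun c _ => (hw0 c).le)
    have hpow : (∑ c, w c)^k ≤ ((2:ℝ)^l)^k * Real.exp (-(L/4) + L^2/8)^k := by
      calc (∑ c, w c)^k ≤ ((2:ℝ)^l * E)^k := pow_le_pow_left₀ hwsum0 (by linarith) k
        _ ≤ ((2:ℝ)^l * Real.exp (-(L/4) + L^2/8))^k := by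
            apply pow_le_pow_left₀ (by positivity)
            have : (0:ℝ) ≤ (2:ℝ)^l := by positivity
            nlinarith
        _ = ((2:ℝ)^l)^k * Real.exp (-(L/4) + L^2/8)^k := mul_pow _ _ _
    have hexp_pow : Real.exp (-(L/4) + L^2/8)^k = Real.exp (k * (-(L/4) + L^2/8)) :=
      (Real.exp_nat_mul _ k).symm
    have hpows : ((2:ℝ)^l)^k * ((2:ℝ)^l)^(n-k) = (2:ℝ)^(l*n) := by
      rw [← pow_mul, ← pow_mul, ← pow_add]
      congr 1
      have : l*k + l*(n-k) = l*(k + (n-k)) := by ring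
      rw [this, Nat.add_sub_cancel' hkn]
    have hexps : Real.exp (L*θ) * Real.exp (k * (-(L/4) + L^2/8))
        = Real.exp (-(2*k*β^2)) := by
      rw [← Real.exp_add]
      congr 1
      rw [hθ, hLdef]
      ring
    calc ((A s t).card : ℝ)
        ≤ Real.exp (L*θ) * ((∑ c, w c)^k * ((2:ℝ)^l)^(n-k)) := by
          rw [← hstep3]; exact le_trans hstep1 hstep2
      _ ≤ Real.exp (L*θ) * ((((2:ℝ)^l)^k * Real.exp (k * (-(L/4) + L^2/8))) * ((2:ℝ)^l)^(n-k)) := by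
          apply mul_le_mul_of_nonneg_left _ (Real.exp_pos _).le
          apply mul_le_mul_of_nonneg_right _ (by positivity)
          rw [← hexp_pow]
          exact hpow
      _ = ((2:ℝ)^l)^k * ((2:ℝ)^l)^(n-k) * (Real.exp (L*θ) * Real.exp (k * (-(L/4) + L^2/8))) := by
          ring
      _ = 2^(l*n) * Real.exp (-(2*k*β^2)) := by rw [hpows, hexps]
  -- union bound
  have hScard : (S ×ˢ S).card ≤ 2^(2*l) := by
    rw [Finset.card_product]
    have h1 : S.card ≤ 2^l := by
      calc S.card ≤ (univ : Finset (Fin l → ZMod 2)).card := Finset.card_filter_le _ _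
        _ = 2^l := by simp [Finset.card_univ]
    calc S.card * S.card ≤ 2^l * 2^l := Nat.mul_le_mul h1 h1
      _ = 2^(2*l) := by rw [← pow_add]; congr 1; ring
  have hmain : ((univ.filter pred).card : ℝ)
      ≤ 2^(2*l) * (2^(l*n) * Real.exp (-(2*k*β^2))) := by
    calc ((univ.filter pred).card : ℝ)
        ≤ (((S ×ˢ S).biUnion (fun q => A q.1 q.2)).card : ℝ) := by
          exact_mod_cast Finset.card_le_card hsub
      _ ≤ ((∑ q ∈ S ×ˢ S, (A q.1 q.2).card : ℕ) : ℝ) := by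
          exact_mod_cast Finset.card_biUnion_le
      _ = ∑ q ∈ S ×ˢ S, ((A q.1 q.2).card : ℝ) := by push_cast; rfl
      _ ≤ ∑ _q ∈ S ×ˢ S, (2:ℝ)^(l*n) * Real.exp (-(2*k*β^2)) := by
          apply Finset.sum_le_sum
          intro q hq
          rw [Finset.mem_product] at hq
          have hq1 : q.1 ≠ 0 := by
            have := hq.1; rw [hS, Finset.mem_filter] at this; exact this.2
          have hq2 : q.2 ≠ 0 := by
            have := hq.2; rw [hS, Finset.mem_filter] at this; exact this.2
          exact hAbound q.1 q.2 hq1 hq2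
      _ = ((S ×ˢ S).card : ℝ) * ((2:ℝ)^(l*n) * Real.exp (-(2*k*β^2))) := by
          rw [Finset.sum_const, nsmul_eq_mul]
      _ ≤ (2:ℝ)^(2*l) * ((2:ℝ)^(l*n) * Real.exp (-(2*k*β^2))) := by
          apply mul_le_mul_of_nonneg_right _ (by positivity)
          exact_mod_cast hScard
  rw [hNat]
  rw [div_le_iff₀ (by positivity : (0:ℝ) < 2^(l*n))]
  calc ((univ.filter pred).card : ℝ)
      ≤ 2^(2*l) * (2^(l*n) * Real.exp (-(2*k*β^2))) := hmain
    _ = 2^(2*l) * Real.exp (-(2*k*β^2)) * 2^(l*n) := by ring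
end
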